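/- arXiv:2602.00693 — 6 statements merged into one kernel-verified Lean document; each statement's English description precedes it below -/
import Mathlib

section
/- Assume every hidden node of G lies on a directed path from an input node to an output node. Then for every c ∈ ℝ^{Ṽ} the invariant set H_G(c) is nonempty; equivalently, for every c ∈ ℝ^{Ṽ} there exists x ∈ ℝ^E with x ≥ 0 entrywise and B̃x = c, i.e., the convex cone generated by the columns of B̃ is all of ℝ^{Ṽ}. -/
noncomputable section

open Matrix Finset

/-- A finite DAG modeling a feed-forward neural architecture: nodes `V`,
edges `edges`, input nodes `VI` (no incoming edges), output nodes `VO`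
(no outgoing edges), with `VI` and `VO` disjoint. -/
structure DagNet where
  V : Type
  [fintypeV : Fintype V]
  [decEqV : DecidableEq V]
  edges : Finset (V × V)
  VI : Finset V
  VO : Finset V
  acyclic : ∀ v : V, ¬ Relation.TransGen (fun a b : V => (a, b) ∈ edges) v v
  no_edge_into_input : ∀ e ∈ edges, Prod.snd e ∉ VI
  no_edge_from_output : ∀ e ∈ edges, Prod.fst e ∉ VO
  io_disjoint : Disjoint VI VO

attribute [instance] DagNet.fintypeV DagNet.decEqV

namespace DagNet

variable (G : DagNet)

/-- The hidden nodes `Ṽ = V \ (V_I ∪ V_O)`. -/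
def hidden : Finset G.V := Finset.univ \ (G.VI ∪ G.VO)

/-- The type of hidden nodes. -/
abbrev Hidden : Type := {v : G.V // v ∈ G.hidden}

/-- The type of edges. -/
abbrev Edge : Type := {e : G.V × G.V // e ∈ G.edges}

/-- The incidence matrix `B̃` of `G` restricted to hidden rows:
`B̃_{v,(i,j)} = 1` if `v = j`, `-1` if `v = i`, `0` otherwise. -/
def B : Matrix G.Hidden G.Edge ℝ :=
  Matrix.of fun v e =>
    if (e : G.V × G.V).2 = (v : G.V) then 1
    else if (e : G.V × G.V).1 = (v : G.V) then -1 else 0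

/-- The rescaling action `T^v_α`: multiplies by `α` the weight of every edge
entering `v`, by `α⁻¹` the weight of every edge leaving `v`, and leaves the
other coordinates unchanged. -/
def rescale (v : G.V) (α : ℝ) (θ : EuclideanSpace ℝ G.Edge) :
    EuclideanSpace ℝ G.Edge :=
  WithLp.toLp 2 fun (e : G.Edge) => if (e : G.V × G.V).2 = v then α * θ e
    else if (e : G.V × G.V).1 = v then α⁻¹ * θ e else θ e

/-- `Reaches a b` iff there is a directed path (possibly trivial) from `a` to `b`. -/
def Reaches (a b : G.V) : Prop :=
  Relation.ReflTransGen (fun x y : G.V => (x, y) ∈ G.edges) a b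

/-- The invariant set `H_G(c) = {θ : B̃ θ² = c}` inside Euclidean space `ℝ^E`. -/
def invariantSet (c : G.Hidden → ℝ) : Set (EuclideanSpace ℝ G.Edge) :=
  {θ | G.B.mulVec (fun e => θ e ^ 2) = c}

/-- `u : Fin (k+1) → V` is a directed path in `G`. -/
def IsPathFun {k : ℕ} (u : Fin (k + 1) → G.V) : Prop :=
  ∀ i : Fin k, (u i.castSucc, u i.succ) ∈ G.edges

/-- Pure ancestors of `v`: hidden ancestors `w` of `v` such that every directed
path from `w` to an output node passes through `v` (this contains `v` itself
whenever `v` is hidden). -/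
def pureAnc (v : G.V) : Set G.V :=
  {w | w ∈ G.hidden ∧ G.Reaches w v ∧
    ∀ (k : ℕ) (u : Fin (k + 1) → G.V), G.IsPathFun u → u 0 = w →
      u (Fin.last k) ∈ G.VO → ∃ i, u i = v}

/-- Pure descendants of `v`: hidden descendants `w` of `v` such that every
directed path from an input node to `w` passes through `v`. -/
def pureDesc (v : G.V) : Set G.V :=
  {w | w ∈ G.hidden ∧ G.Reaches v w ∧
    ∀ (k : ℕ) (u : Fin (k + 1) → G.V), G.IsPathFun u → u (Fin.last k) = w →
      u 0 ∈ G.VI → ∃ i, u i = v}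

/-- An out-bottleneck: a hidden node with exactly one outgoing edge. -/
def OutBottleneck (v : G.V) : Prop :=
  v ∈ G.hidden ∧ (G.edges.filter (fun e => e.1 = v)).card = 1

/-- An in-bottleneck: a hidden node with exactly one incoming edge. -/
def InBottleneck (v : G.V) : Prop :=
  v ∈ G.hidden ∧ (G.edges.filter (fun e => e.2 = v)).card = 1

/-- The projection sending each hidden node to itself and each
input/output node to the glued point `⋆ = none`. -/
def pi (v : G.V) : Option G.Hidden :=
  if h : v ∈ G.hidden then some ⟨v, h⟩ else none

/-- The undirected graph on `Ṽ ⊔ {⋆}` with an edge between `π(u)` and `π(w)`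
for each edge `(u,w)` of `G` with nonzero weight. -/
def quotGraph (θ : G.Edge → ℝ) : SimpleGraph (Option G.Hidden) :=
  SimpleGraph.fromRel (fun a b => ∃ e : G.Edge, θ e ≠ 0 ∧
    a = G.pi (e : G.V × G.V).1 ∧ b = G.pi (e : G.V × G.V).2)

end DagNet


lemma DagNet.flow_exists (G : DagNet) {a b : G.V} (h : G.Reaches a b) :
    ∃ x : G.Edge → ℝ, (∀ e, 0 ≤ x e) ∧
      G.B.mulVec x = fun v : G.Hidden =>
        (if (v : G.V) = b then (1:ℝ) else 0) - (if (v : G.V) = a then 1 else 0) := by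
  induction h with
  | refl =>
      refine ⟨0, fun e => le_rfl, ?_⟩
      funext v; simp [Matrix.mulVec_zero]
  | @tail p q hp hpq ih =>
      obtain ⟨x, hx, hBx⟩ := ih
      have hne : p ≠ q := fun h => G.acyclic q (Relation.TransGen.single (h ▸ hpq))
      refine ⟨x + Pi.single (⟨(p, q), hpq⟩ : G.Edge) (1:ℝ), ?_, ?_⟩
      · intro e
        have h0 : (0:ℝ) ≤ (Pi.single (⟨(p,q),hpq⟩ : G.Edge) (1:ℝ) : G.Edge → ℝ) e := by
          rcases eq_or_ne e ⟨(p,q),hpq⟩ with rfl | h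
          · simp
          · simp [Pi.single_eq_of_ne h]
        exact add_nonneg (hx e) h0
      · rw [Matrix.mulVec_add, hBx, Matrix.mulVec_single_one]
        funext v
        have hB : G.B v ⟨(p,q),hpq⟩ =
            (if (v:G.V) = q then (1:ℝ) else 0) - (if (v:G.V) = p then 1 else 0) := by
          simp only [DagNet.B, Matrix.of_apply]
          rcases eq_or_ne (v:G.V) q with hq | hq <;>
            rcases eq_or_ne (v:G.V) p with hp2 | hp2 <;>
            simp_all [eq_comm]
        simp only [Pi.add_apply, Pi.sub_apply, mul_one, Matrix.col_apply, hB]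
        ring

lemma DagNet.unit_flow (G : DagNet)
    (hpath : ∀ v ∈ G.hidden, ∃ i ∈ G.VI, ∃ o ∈ G.VO,
      G.Reaches i v ∧ G.Reaches v o) (v : G.Hidden) :
    (∃ x : G.Edge → ℝ, (∀ e, 0 ≤ x e) ∧
        G.B.mulVec x = fun h => if h = v then (1:ℝ) else 0) ∧
    (∃ x : G.Edge → ℝ, (∀ e, 0 ≤ x e) ∧
        G.B.mulVec x = fun h => if h = v then (-1:ℝ) else 0) := by
  obtain ⟨i, hi, o, ho, hiv, hvo⟩ := hpath v v.2
  constructor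
  · obtain ⟨x, hx, hBx⟩ := G.flow_exists hiv
    refine ⟨x, hx, ?_⟩
    rw [hBx]; funext h
    have hVi : (h : G.V) ≠ i := by
      intro he
      have hh := h.2
      simp only [DagNet.hidden, Finset.mem_sdiff, Finset.mem_union] at hh
      exact hh.2 (Or.inl (he ▸ hi))
    rw [if_neg hVi, sub_zero]; simp only [Subtype.ext_iff]
  · obtain ⟨x, hx, hBx⟩ := G.flow_exists hvo
    refine ⟨x, hx, ?_⟩
    rw [hBx]; funext h
    have hVo : (h : G.V) ≠ o := by
      intro he
      have hh := h.2
      simp only [DagNet.hidden, Finset.mem_sdiff, Finset.mem_union] at hh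
      exact hh.2 (Or.inr (he ▸ ho))
    rcases eq_or_ne h v with rfl | hv
    · simp [hVo]
    · have : (h : G.V) ≠ (v : G.V) := fun he => hv (Subtype.ext he)
      simp [hVo, hv, this]

/-- if every hidden node lies on a directed path from an input
node to an output node, then for every `c` the invariant set `H_G(c)` is
nonempty; equivalently there is an entrywise-nonnegative `x` with `B̃ x = c`,
i.e. the convex cone generated by the columns of `B̃` is all of `ℝ^Ṽ`. -/
theorem statement2 (G : DagNet)
    (hpath : ∀ v ∈ G.hidden, ∃ i ∈ G.VI, ∃ o ∈ G.VO,
      G.Reaches i v ∧ G.Reaches v o)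
    (c : G.Hidden → ℝ) :
    (G.invariantSet c).Nonempty ∧
      ∃ x : G.Edge → ℝ, (∀ e, 0 ≤ x e) ∧ G.B.mulVec x = c := by
  have key : ∃ x : G.Edge → ℝ, (∀ e, 0 ≤ x e) ∧ G.B.mulVec x = c := by
    have h1 := fun v => (G.unit_flow hpath v).1
    have h2 := fun v => (G.unit_flow hpath v).2
    choose f hf hBf using h1
    choose g hg hBg using h2
    refine ⟨∑ v : G.Hidden, (max (c v) 0 • f v + max (-(c v)) 0 • g v), ?_, ?_⟩
    · intro e
      rw [Finset.sum_apply]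
      refine Finset.sum_nonneg fun v _ => ?_
      simp only [Pi.add_apply, Pi.smul_apply, smul_eq_mul]
      exact add_nonneg (mul_nonneg (le_max_right _ _) (hf v e))
        (mul_nonneg (le_max_right _ _) (hg v e))
    · have hlin : G.B.mulVec (∑ v : G.Hidden, (max (c v) 0 • f v + max (-(c v)) 0 • g v))
          = ∑ v : G.Hidden, (max (c v) 0 • (fun h => if h = v then (1:ℝ) else 0)
              + max (-(c v)) 0 • (fun h => if h = v then (-1:ℝ) else 0)) := by
        rw [← Matrix.mulVecLin_apply, map_sum]
        refine Finset.sum_congr rfl fun v _ => ?_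
        rw [map_add, _root_.map_smul, _root_.map_smul, Matrix.mulVecLin_apply, Matrix.mulVecLin_apply,
          hBf, hBg]
      rw [hlin]
      funext h
      rw [Finset.sum_apply]
      rw [Finset.sum_eq_single h]
      · simp only [Pi.add_apply, Pi.smul_apply, smul_eq_mul, if_pos rfl, if_true,
          mul_one, mul_neg_one]
        rw [← sub_eq_add_neg]
        exact max_zero_sub_eq_self (c h)
      · intro v _ hv
        have : h ≠ v := fun he => hv he.symm
        simp [this]
      · intro hh; exact absurd (Finset.mem_univ h) hh
  obtain ⟨x, hx, hBx⟩ := key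
  have hsq : (fun e => (Real.sqrt (x e)) ^ 2) = x := funext fun e => Real.sq_sqrt (hx e)
  exact ⟨⟨WithLp.toLp 2 fun e => Real.sqrt (x e), by show G.B.mulVec (fun e => (Real.sqrt (x e)) ^ 2) = c; rw [hsq]; exact hBx⟩,
    x, hx, hBx⟩
end
end

section
/- Assume every hidden node of G lies on a directed path from an input node to an output node, and assume G has no bottleneck nodes, i.e., every hidden node has at least two incoming edges and at least two outgoing edges. Then for every c ∈ ℝ^{Ṽ}, the invariant set H_G(c) is a connected subset of ℝ^E. -/
noncomputable section

open Matrix Finset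

section AuxProof

/-- Signed square root: keeps the sign of `x` while having square `x ^ 2 + δ`. -/
noncomputable def sg (x δ : ℝ) : ℝ :=
  if x < 0 then -Real.sqrt (x ^ 2 + δ) else Real.sqrt (x ^ 2 + δ)

lemma sg_sq (x : ℝ) {δ : ℝ} (h : 0 ≤ δ) : sg x δ ^ 2 = x ^ 2 + δ := by
  have h0 : (0:ℝ) ≤ x ^ 2 + δ := by positivity
  unfold sg; split <;> simp [Real.sq_sqrt h0]

lemma sg_zero (x : ℝ) : sg x 0 = x := by
  unfold sg
  rcases lt_or_ge x 0 with h | h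
  · rw [if_pos h, add_zero, Real.sqrt_sq_eq_abs, abs_of_neg h, neg_neg]
  · rw [if_neg (not_lt.2 h), add_zero, Real.sqrt_sq_eq_abs, abs_of_nonneg h]

lemma sg_continuous (x : ℝ) : Continuous fun δ => sg x δ := by
  unfold sg
  rcases lt_or_ge x 0 with h | h
  · simp only [if_pos h]
    exact (Real.continuous_sqrt.comp (by continuity)).neg
  · simp only [if_neg (not_lt.2 h)]
    exact Real.continuous_sqrt.comp (by continuity)

lemma joinedIn_of_continuous {X : Type*} [TopologicalSpace X] {s : Set X} {γ : ℝ → X}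
    (hc : Continuous γ) (hm : ∀ t : ℝ, γ t ∈ s) : JoinedIn s (γ 0) (γ 1) := by
  refine ⟨⟨⟨fun t => γ t, hc.comp continuous_subtype_val⟩, ?_, ?_⟩, fun t => hm _⟩ <;> simp

end AuxProof

namespace DagNet

variable (G : DagNet)

lemma no_self_loop {x : G.V} (h : (x, x) ∈ G.edges) : False :=
  G.acyclic x (Relation.TransGen.single h)

lemma edge_ne {e : G.V × G.V} (h : e ∈ G.edges) : e.1 ≠ e.2 := by
  intro hq
  have h' : (e.1, e.2) ∈ G.edges := by rwa [Prod.mk.eta]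
  rw [hq] at h'
  exact G.no_self_loop h'

lemma B_apply (v : G.Hidden) (e : G.Edge) :
    G.B v e = if (e : G.V × G.V).2 = (v : G.V) then 1
      else if (e : G.V × G.V).1 = (v : G.V) then -1 else 0 := rfl

lemma B_entry (v : G.Hidden) (e : G.Edge) :
    G.B v e = (if (v : G.V) = (e : G.V × G.V).2 then 1 else 0)
      - (if (v : G.V) = (e : G.V × G.V).1 then 1 else 0) := by
  have hne := G.edge_ne e.2
  rw [B_apply]
  by_cases h1 : (e : G.V × G.V).2 = (v : G.V) <;>
    by_cases h2 : (e : G.V × G.V).1 = (v : G.V)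
  · exact absurd (h2.trans h1.symm) hne
  · rw [if_pos h1, if_pos h1.symm, if_neg (fun h : (v : G.V) = _ => h2 h.symm)]; norm_num
  · rw [if_neg h1, if_pos h2, if_neg (fun h : (v : G.V) = _ => h1 h.symm), if_pos h2.symm]
    norm_num
  · rw [if_neg h1, if_neg h2, if_neg (fun h : (v : G.V) = _ => h1 h.symm),
      if_neg (fun h : (v : G.V) = _ => h2 h.symm)]
    norm_num

/-- Characteristic vector of an edge. -/
def chi (e : G.Edge) : G.Edge → ℝ := fun f => if f = e then 1 else 0

lemma chi_nonneg (e f : G.Edge) : 0 ≤ G.chi e f := by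
  unfold chi; split <;> norm_num

lemma mulVec_chi (e : G.Edge) (v : G.Hidden) :
    G.B.mulVec (G.chi e) v = G.B v e := by
  simp [Matrix.mulVec, dotProduct, chi, mul_ite]

/-- The flow associated to a directed walk: nonnegative, supported on edges of the
walk, with divergence `e_w - e_u` on hidden rows. -/
lemma walk_flow {u w : G.V} (h : G.Reaches u w) :
    ∃ f : G.Edge → ℝ, (∀ e, 0 ≤ f e) ∧
      (∀ e : G.Edge, f e ≠ 0 → G.Reaches u (e : G.V × G.V).1 ∧ G.Reaches (e : G.V × G.V).2 w) ∧
      ∀ v : G.Hidden, G.B.mulVec f v =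
        (if (v : G.V) = w then 1 else 0) - (if (v : G.V) = u then 1 else 0) := by
  induction h using Relation.ReflTransGen.head_induction_on with
  | refl => exact ⟨0, fun e => le_refl 0, fun e he => absurd rfl he, by simp⟩
  | @head a b hab hbw ih =>
    obtain ⟨f, hf0, hfsupp, hfdiv⟩ := ih
    refine ⟨f + G.chi ⟨(a, b), hab⟩, fun e => add_nonneg (hf0 e) (G.chi_nonneg _ e), ?_, ?_⟩
    · intro e he
      by_cases heq : e = ⟨(a, b), hab⟩
      · subst heq
        exact ⟨Relation.ReflTransGen.refl, hbw⟩
      · have : G.chi ⟨(a, b), hab⟩ e = 0 := by simp [chi, heq]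
        have hfe : f e ≠ 0 := by
          intro h0; apply he; simp [Pi.add_apply, h0, this]
        obtain ⟨h1, h2⟩ := hfsupp e hfe
        exact ⟨Relation.ReflTransGen.head hab h1, h2⟩
    · intro v
      have hVadd : G.B.mulVec (f + G.chi ⟨(a, b), hab⟩) v
          = G.B.mulVec f v + G.B.mulVec (G.chi ⟨(a, b), hab⟩) v := by
        rw [← Matrix.mulVecLin_apply, map_add]; simp [Matrix.mulVecLin_apply]
      rw [hVadd, hfdiv v, mulVec_chi, B_entry]
      ring

lemma hidden_of_not_io {x : G.V} (h1 : x ∉ G.VI) (h2 : x ∉ G.VO) : x ∈ G.hidden := by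
  simp [hidden, h1, h2]

lemma hidden_ne_of_VI {v : G.Hidden} {x : G.V} (hx : x ∈ G.VI) : (v : G.V) ≠ x := by
  intro h
  have hv := Finset.mem_sdiff.mp (show (v : G.V) ∈ Finset.univ \ (G.VI ∪ G.VO) from v.2)
  exact hv.2 (Finset.mem_union_left _ (h ▸ hx))

lemma hidden_ne_of_VO {v : G.Hidden} {x : G.V} (hx : x ∈ G.VO) : (v : G.V) ≠ x := by
  intro h
  have hv := Finset.mem_sdiff.mp (show (v : G.V) ∈ Finset.univ \ (G.VI ∪ G.VO) from v.2)
  exact hv.2 (Finset.mem_union_right _ (h ▸ hx))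

lemma mulVec_add' (f g : G.Edge → ℝ) (v : G.Hidden) :
    G.B.mulVec (f + g) v = G.B.mulVec f v + G.B.mulVec g v := by
  rw [← Matrix.mulVecLin_apply, map_add]; simp [Matrix.mulVecLin_apply]

lemma mulVec_sub' (f g : G.Edge → ℝ) (v : G.Hidden) :
    G.B.mulVec (f - g) v = G.B.mulVec f v - G.B.mulVec g v := by
  rw [← Matrix.mulVecLin_apply, map_sub]; simp [Matrix.mulVecLin_apply]

lemma mulVec_smul' (r : ℝ) (f : G.Edge → ℝ) (v : G.Hidden) :
    G.B.mulVec (r • f) v = r * G.B.mulVec f v := by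
  rw [← Matrix.mulVecLin_apply, _root_.map_smul]
  simp [Matrix.mulVecLin_apply]

/-- Compensating flow entering the head of `eh`, avoiding `eh`. -/
lemma exists_Q
    (hpath : ∀ v ∈ G.hidden, ∃ i ∈ G.VI, ∃ o ∈ G.VO, G.Reaches i v ∧ G.Reaches v o)
    (hnb : ∀ v ∈ G.hidden, 2 ≤ (G.edges.filter (fun e => e.2 = v)).card ∧
      2 ≤ (G.edges.filter (fun e => e.1 = v)).card)
    (eh : G.Edge) :
    ∃ f : G.Edge → ℝ, (∀ e, 0 ≤ f e) ∧ f eh = 0 ∧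
      ∀ v : G.Hidden, G.B.mulVec f v =
        (if (v : G.V) = (eh : G.V × G.V).2 then 1 else 0) := by
  by_cases hbO : (eh : G.V × G.V).2 ∈ G.VO
  · refine ⟨0, fun e => le_refl 0, rfl, fun v => ?_⟩
    rw [Matrix.mulVec_zero, Pi.zero_apply, if_neg (G.hidden_ne_of_VO hbO)]
  · have hbI : (eh : G.V × G.V).2 ∉ G.VI := G.no_edge_into_input _ eh.2
    have hbh : (eh : G.V × G.V).2 ∈ G.hidden := G.hidden_of_not_io hbI hbO
    have h2 := (hnb _ hbh).1
    obtain ⟨e', he'mem, he'ne⟩ :=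
      Finset.exists_mem_ne (lt_of_lt_of_le one_lt_two h2) (eh : G.V × G.V)
    rw [Finset.mem_filter] at he'mem
    obtain ⟨he'E, he'b⟩ := he'mem
    have hchi : G.chi ⟨e', he'E⟩ eh = 0 := by
      unfold chi
      exact if_neg (fun h => he'ne (congrArg Subtype.val h).symm)
    by_cases ha'I : e'.1 ∈ G.VI
    · refine ⟨G.chi ⟨e', he'E⟩, G.chi_nonneg _, hchi, fun v => ?_⟩
      rw [mulVec_chi, B_entry]
      show (if (v : G.V) = e'.2 then (1:ℝ) else 0) - (if (v : G.V) = e'.1 then 1 else 0) = _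
      rw [he'b, if_neg (G.hidden_ne_of_VI ha'I), sub_zero]
    · have ha'O : e'.1 ∉ G.VO := G.no_edge_from_output _ he'E
      have ha'h : e'.1 ∈ G.hidden := G.hidden_of_not_io ha'I ha'O
      obtain ⟨i, hiI, o, hoO, hia', _⟩ := hpath _ ha'h
      obtain ⟨f, hf0, hfsupp, hfdiv⟩ := G.walk_flow hia'
      have hedge : (e'.1, (eh : G.V × G.V).2) ∈ G.edges := by
        rw [← he'b, Prod.mk.eta]; exact he'E
      have hfeh : f eh = 0 := by
        by_contra h
        exact G.acyclic _ (Relation.TransGen.tail' (hfsupp eh h).2 hedge)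
      refine ⟨f + G.chi ⟨e', he'E⟩, fun e => add_nonneg (hf0 e) (G.chi_nonneg _ _), ?_,
        fun v => ?_⟩
      · show f eh + G.chi ⟨e', he'E⟩ eh = 0
        rw [hfeh, hchi, add_zero]
      · rw [mulVec_add', hfdiv v, mulVec_chi, B_entry]
        show (if (v : G.V) = e'.1 then (1:ℝ) else 0) - (if (v : G.V) = i then 1 else 0)
            + ((if (v : G.V) = e'.2 then 1 else 0) - (if (v : G.V) = e'.1 then 1 else 0)) = _
        rw [he'b, if_neg (G.hidden_ne_of_VI hiI)]
        ring

/-- Compensating flow leaving the tail of `eh`, avoiding `eh`. -/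
lemma exists_R
    (hpath : ∀ v ∈ G.hidden, ∃ i ∈ G.VI, ∃ o ∈ G.VO, G.Reaches i v ∧ G.Reaches v o)
    (hnb : ∀ v ∈ G.hidden, 2 ≤ (G.edges.filter (fun e => e.2 = v)).card ∧
      2 ≤ (G.edges.filter (fun e => e.1 = v)).card)
    (eh : G.Edge) :
    ∃ f : G.Edge → ℝ, (∀ e, 0 ≤ f e) ∧ f eh = 0 ∧
      ∀ v : G.Hidden, G.B.mulVec f v =
        -(if (v : G.V) = (eh : G.V × G.V).1 then 1 else 0) := by
  by_cases haI : (eh : G.V × G.V).1 ∈ G.VI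
  · refine ⟨0, fun e => le_refl 0, rfl, fun v => ?_⟩
    rw [Matrix.mulVec_zero, Pi.zero_apply, if_neg (G.hidden_ne_of_VI haI), neg_zero]
  · have haO : (eh : G.V × G.V).1 ∉ G.VO := G.no_edge_from_output _ eh.2
    have hah : (eh : G.V × G.V).1 ∈ G.hidden := G.hidden_of_not_io haI haO
    have h2 := (hnb _ hah).2
    obtain ⟨e', he'mem, he'ne⟩ :=
      Finset.exists_mem_ne (lt_of_lt_of_le one_lt_two h2) (eh : G.V × G.V)
    rw [Finset.mem_filter] at he'mem
    obtain ⟨he'E, he'a⟩ := he'mem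
    have hchi : G.chi ⟨e', he'E⟩ eh = 0 := by
      unfold chi
      exact if_neg (fun h => he'ne (congrArg Subtype.val h).symm)
    by_cases hb'O : e'.2 ∈ G.VO
    · refine ⟨G.chi ⟨e', he'E⟩, G.chi_nonneg _, hchi, fun v => ?_⟩
      rw [mulVec_chi, B_entry]
      show (if (v : G.V) = e'.2 then (1:ℝ) else 0) - (if (v : G.V) = e'.1 then 1 else 0) = _
      rw [he'a, if_neg (G.hidden_ne_of_VO hb'O)]
      ring
    · have hb'I : e'.2 ∉ G.VI := G.no_edge_into_input _ he'E
      have hb'h : e'.2 ∈ G.hidden := G.hidden_of_not_io hb'I hb'O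
      obtain ⟨i, hiI, o, hoO, _, hb'o⟩ := hpath _ hb'h
      obtain ⟨f, hf0, hfsupp, hfdiv⟩ := G.walk_flow hb'o
      have hedge : ((eh : G.V × G.V).1, e'.2) ∈ G.edges := by
        rw [← he'a, Prod.mk.eta]; exact he'E
      have hfeh : f eh = 0 := by
        by_contra h
        exact G.acyclic _ (Relation.TransGen.tail' (hfsupp eh h).1 hedge)
      refine ⟨f + G.chi ⟨e', he'E⟩, fun e => add_nonneg (hf0 e) (G.chi_nonneg _ _), ?_,
        fun v => ?_⟩
      · show f eh + G.chi ⟨e', he'E⟩ eh = 0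
        rw [hfeh, hchi, add_zero]
      · rw [mulVec_add', hfdiv v, mulVec_chi, B_entry]
        show (if (v : G.V) = o then (1:ℝ) else 0) - (if (v : G.V) = e'.2 then 1 else 0)
            + ((if (v : G.V) = e'.2 then 1 else 0) - (if (v : G.V) = e'.1 then 1 else 0)) = _
        rw [he'a, if_neg (G.hidden_ne_of_VO hoO)]
        ring

end DagNet

/-- Clamped reparametrization of `[0,1]` onto `[-1,1]`. -/
noncomputable def tclamp (t : ℝ) : ℝ := max (-1) (min 1 (2 * t - 1))

lemma tclamp_mem (t : ℝ) : -1 ≤ tclamp t ∧ tclamp t ≤ 1 :=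
  ⟨le_max_left _ _, max_le (by norm_num) (min_le_left _ _)⟩

lemma tclamp_zero : tclamp 0 = -1 := by norm_num [tclamp]

lemma tclamp_one : tclamp 1 = 1 := by norm_num [tclamp]

lemma tclamp_continuous : Continuous tclamp := by
  unfold tclamp
  exact continuous_const.max (continuous_const.min (by continuity))

namespace DagNet

variable (G : DagNet)

/-- Negating a single coordinate. -/
noncomputable def flipNeg (θ : EuclideanSpace ℝ G.Edge) (eh : G.Edge) :
    EuclideanSpace ℝ G.Edge :=
  WithLp.toLp 2 fun f => if f = eh then -θ f else θ f

/-- Within `H_G(c)` one can continuously flip the sign of any single coordinate. -/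
lemma joined_flip
    (hpath : ∀ v ∈ G.hidden, ∃ i ∈ G.VI, ∃ o ∈ G.VO, G.Reaches i v ∧ G.Reaches v o)
    (hnb : ∀ v ∈ G.hidden, 2 ≤ (G.edges.filter (fun e => e.2 = v)).card ∧
      2 ≤ (G.edges.filter (fun e => e.1 = v)).card)
    {c : G.Hidden → ℝ} {θ : EuclideanSpace ℝ G.Edge} (hθ : θ ∈ G.invariantSet c)
    (eh : G.Edge) :
    JoinedIn (G.invariantSet c) (G.flipNeg θ eh) θ := by
  classical
  obtain ⟨fQ, hQ0, hQe, hQdiv⟩ := G.exists_Q hpath hnb eh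
  obtain ⟨fR, hR0, hRe, hRdiv⟩ := G.exists_R hpath hnb eh
  set d : G.Edge → ℝ := fQ + fR - G.chi eh with hd
  have hddiv : ∀ v : G.Hidden, G.B.mulVec d v = 0 := by
    intro v
    rw [hd, mulVec_sub', mulVec_add', hQdiv, hRdiv, mulVec_chi, B_entry]
    ring
  have hde : d eh = -1 := by
    have hch : G.chi eh eh = 1 := if_pos rfl
    simp [hd, hQe, hRe, hch]
  have hdpos : ∀ f, f ≠ eh → 0 ≤ d f := by
    intro f hf
    have h0 : G.chi eh f = 0 := if_neg hf
    simp only [hd, Pi.sub_apply, Pi.add_apply, h0, sub_zero]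
    exact add_nonneg (hQ0 f) (hR0 f)
  have hsnn : ∀ t : ℝ, 0 ≤ (1 - tclamp t ^ 2) * (θ eh ^ 2) := by
    intro t
    have h1 := (tclamp_mem t).1
    have h2 := (tclamp_mem t).2
    have h3 : 0 ≤ (1 - tclamp t) * (tclamp t + 1) := mul_nonneg (by linarith) (by linarith)
    nlinarith [mul_nonneg h3 (sq_nonneg (θ eh))]
  set γfun : ℝ → EuclideanSpace ℝ G.Edge := fun t =>
    WithLp.toLp 2 (fun f => if f = eh then tclamp t * θ eh
      else sg (θ f) ((1 - tclamp t ^ 2) * (θ eh ^ 2) * d f)) with hγ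
  have hcont : Continuous γfun := by
    rw [hγ]
    show Continuous (WithLp.toLp 2 ∘ fun t =>
      (fun f => if f = eh then tclamp t * θ eh
        else sg (θ f) ((1 - tclamp t ^ 2) * (θ eh ^ 2) * d f)))
    refine (PiLp.continuous_toLp 2 (fun _ : G.Edge => ℝ)).comp
      (continuous_pi fun f => ?_)
    by_cases hf : f = eh
    · simp only [if_pos hf]
      exact tclamp_continuous.mul continuous_const
    · simp only [if_neg hf]
      exact (sg_continuous (θ f)).comp
        (((continuous_const.sub (tclamp_continuous.pow 2)).mul
          continuous_const).mul continuous_const)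
  have hmem : ∀ t : ℝ, γfun t ∈ G.invariantSet c := by
    intro t
    show G.B.mulVec (fun e => γfun t e ^ 2) = c
    have hsq : (fun e : G.Edge => γfun t e ^ 2)
        = (fun e => θ e ^ 2) + ((1 - tclamp t ^ 2) * (θ eh ^ 2)) • d := by
      funext f
      simp only [hγ, PiLp.toLp_apply, Pi.add_apply, Pi.smul_apply, smul_eq_mul]
      by_cases hf : f = eh
      · subst hf
        rw [if_pos rfl, hde, mul_pow]
        ring
      · rw [if_neg hf, sg_sq _ (mul_nonneg (hsnn t) (hdpos f hf))]
    rw [hsq]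
    funext v
    rw [mulVec_add', mulVec_smul', hddiv v, mul_zero, add_zero]
    exact congrFun hθ v
  have key := joinedIn_of_continuous hcont hmem
  have h0 : γfun 0 = G.flipNeg θ eh := by
    ext f
    simp only [hγ, PiLp.toLp_apply]
    by_cases hf : f = eh
    · subst hf
      rw [if_pos rfl, tclamp_zero]
      simp [flipNeg]
    · rw [if_neg hf, tclamp_zero]
      norm_num [sg_zero, flipNeg, hf]
  have h1 : γfun 1 = θ := by
    ext f
    simp only [hγ, PiLp.toLp_apply]
    by_cases hf : f = eh
    · subst hf
      rw [if_pos rfl, tclamp_one, one_mul]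
    · rw [if_neg hf, tclamp_one]
      norm_num [sg_zero]
  rw [h0, h1] at key
  exact key

end DagNet

namespace DagNet

variable (G : DagNet)

/-- Every point of `H_G(c)` is joined within it to its coordinatewise absolute value. -/
lemma joined_abs
    (hpath : ∀ v ∈ G.hidden, ∃ i ∈ G.VI, ∃ o ∈ G.VO, G.Reaches i v ∧ G.Reaches v o)
    (hnb : ∀ v ∈ G.hidden, 2 ≤ (G.edges.filter (fun e => e.2 = v)).card ∧
      2 ≤ (G.edges.filter (fun e => e.1 = v)).card)
    {c : G.Hidden → ℝ} :
    ∀ (n : ℕ) (θ : EuclideanSpace ℝ G.Edge), θ ∈ G.invariantSet c →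
      (Finset.univ.filter (fun f => θ f < 0)).card = n →
      JoinedIn (G.invariantSet c) θ (WithLp.toLp 2 (fun f => |θ f|)) := by
  intro n
  induction n using Nat.strong_induction_on with
  | _ n ih =>
    intro θ hθ hcard
    rcases Nat.eq_zero_or_pos n with h0 | hpos
    · have hnolt : ∀ f, ¬ θ f < 0 := by
        intro f hf
        have hc0 : (Finset.univ.filter (fun f => θ f < 0)) = ∅ :=
          Finset.card_eq_zero.mp (by rw [hcard, h0])
        have hmem : f ∈ (∅ : Finset G.Edge) :=
          hc0 ▸ Finset.mem_filter.2 ⟨Finset.mem_univ f, hf⟩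
        simp at hmem
      have habs : (WithLp.toLp 2 (fun f => |θ f|) : EuclideanSpace ℝ G.Edge) = θ :=
        PiLp.ext fun f => abs_of_nonneg (not_lt.1 (hnolt f))
      rw [habs]
      exact JoinedIn.refl hθ
    · have hne : (Finset.univ.filter (fun f => θ f < 0)).Nonempty := by
        rw [← Finset.card_pos, hcard]; exact hpos
      obtain ⟨eh, heh⟩ := hne
      have hehlt : θ eh < 0 := (Finset.mem_filter.mp heh).2
      have J1 := G.joined_flip hpath hnb hθ eh
      have hθ' : G.flipNeg θ eh ∈ G.invariantSet c := J1.source_mem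
      have hfe : (Finset.univ.filter (fun f => G.flipNeg θ eh f < 0))
          = (Finset.univ.filter (fun f => θ f < 0)).erase eh := by
        ext f
        simp only [Finset.mem_erase, Finset.mem_filter, Finset.mem_univ, true_and, flipNeg,
            PiLp.toLp_apply]
        by_cases hf : f = eh
        · subst hf
          simp only [if_true, ne_eq, not_true_eq_false, false_and, iff_false, not_lt]
          linarith
        · simp only [if_neg hf]
          exact ⟨fun h => ⟨hf, h⟩, fun h => h.2⟩
      have hcard' : (Finset.univ.filter (fun f => G.flipNeg θ eh f < 0)).card = n - 1 := by
        rw [hfe, Finset.card_erase_of_mem heh, hcard]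
      have J2 := ih (n - 1) (by omega) _ hθ' hcard'
      have habs : (WithLp.toLp 2 (fun f => |G.flipNeg θ eh f|) : EuclideanSpace ℝ G.Edge)
          = WithLp.toLp 2 (fun f => |θ f|) := by
        ext f
        simp only [flipNeg, PiLp.toLp_apply]
        by_cases hf : f = eh
        · rw [if_pos hf, abs_neg]
        · rw [if_neg hf]
      rw [habs] at J2
      exact (J1.symm).trans J2

/-- Two coordinatewise-nonnegative points of `H_G(c)` are joined within it. -/
lemma joined_nonneg {c : G.Hidden → ℝ} {θ θ' : EuclideanSpace ℝ G.Edge}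
    (hθ : θ ∈ G.invariantSet c) (hθ' : θ' ∈ G.invariantSet c)
    (h0 : ∀ f, 0 ≤ θ f) (h0' : ∀ f, 0 ≤ θ' f) :
    JoinedIn (G.invariantSet c) θ θ' := by
  classical
  set u : ℝ → ℝ := fun t => max 0 (min 1 t) with hu
  have hu0 : u 0 = 0 := by norm_num [hu]
  have hu1 : u 1 = 1 := by norm_num [hu]
  have humem : ∀ t, 0 ≤ u t ∧ u t ≤ 1 :=
    fun t => ⟨le_max_left _ _, max_le zero_le_one (min_le_left _ _)⟩
  have hucont : Continuous u := continuous_const.max (continuous_const.min continuous_id)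
  set γfun : ℝ → EuclideanSpace ℝ G.Edge := fun t =>
    WithLp.toLp 2 (fun f => Real.sqrt ((1 - u t) * θ f ^ 2 + u t * θ' f ^ 2)) with hγ
  have hargnn : ∀ (t : ℝ) (f : G.Edge), 0 ≤ (1 - u t) * θ f ^ 2 + u t * θ' f ^ 2 := by
    intro t f
    obtain ⟨ha, hb⟩ := humem t
    exact add_nonneg (mul_nonneg (by linarith) (sq_nonneg _))
      (mul_nonneg ha (sq_nonneg _))
  have hcont : Continuous γfun := by
    rw [hγ]
    show Continuous (WithLp.toLp 2 ∘ fun t =>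
      (fun f => Real.sqrt ((1 - u t) * θ f ^ 2 + u t * θ' f ^ 2)))
    refine (PiLp.continuous_toLp 2 (fun _ : G.Edge => ℝ)).comp
      (continuous_pi fun f => ?_)
    exact Real.continuous_sqrt.comp
      (((continuous_const.sub hucont).mul continuous_const).add
        (hucont.mul continuous_const))
  have hmem : ∀ t : ℝ, γfun t ∈ G.invariantSet c := by
    intro t
    show G.B.mulVec (fun e => γfun t e ^ 2) = c
    have hsq : (fun e : G.Edge => γfun t e ^ 2)
        = (1 - u t) • (fun e => θ e ^ 2) + u t • (fun e => θ' e ^ 2) := by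
      funext f
      simp only [hγ, PiLp.toLp_apply, Pi.add_apply, Pi.smul_apply, smul_eq_mul]
      rw [Real.sq_sqrt (hargnn t f)]
    rw [hsq]
    funext v
    rw [mulVec_add', mulVec_smul', mulVec_smul', congrFun hθ v, congrFun hθ' v]
    ring
  have key := joinedIn_of_continuous hcont hmem
  have h0eq : γfun 0 = θ := by
    ext f
    simp only [hγ, hu0, PiLp.toLp_apply]
    have harg : (1 - 0) * θ f ^ 2 + 0 * θ' f ^ 2 = θ f ^ 2 := by ring
    rw [harg, Real.sqrt_sq (h0 f)]
  have h1eq : γfun 1 = θ' := by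
    ext f
    simp only [hγ, hu1, PiLp.toLp_apply]
    have harg : (1 - 1) * θ f ^ 2 + 1 * θ' f ^ 2 = θ' f ^ 2 := by ring
    rw [harg, Real.sqrt_sq (h0' f)]
  rw [h0eq, h1eq] at key
  exact key

/-- The invariant set is nonempty. -/
lemma invariantSet_nonempty
    (hpath : ∀ v ∈ G.hidden, ∃ i ∈ G.VI, ∃ o ∈ G.VO, G.Reaches i v ∧ G.Reaches v o)
    (c : G.Hidden → ℝ) :
    (G.invariantSet c).Nonempty := by
  classical
  have hplus : ∀ v : G.Hidden, ∃ f : G.Edge → ℝ, (∀ e, 0 ≤ f e) ∧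
      ∀ w : G.Hidden, G.B.mulVec f w = if (w : G.V) = (v : G.V) then 1 else 0 := by
    intro v
    obtain ⟨i, hiI, o, hoO, hiv, _⟩ := hpath v v.2
    obtain ⟨f, hf0, _, hfdiv⟩ := G.walk_flow hiv
    refine ⟨f, hf0, fun w => ?_⟩
    rw [hfdiv w, if_neg (G.hidden_ne_of_VI hiI), sub_zero]
  have hminus : ∀ v : G.Hidden, ∃ f : G.Edge → ℝ, (∀ e, 0 ≤ f e) ∧
      ∀ w : G.Hidden, G.B.mulVec f w = -(if (w : G.V) = (v : G.V) then 1 else 0) := by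
    intro v
    obtain ⟨i, hiI, o, hoO, _, hvo⟩ := hpath v v.2
    obtain ⟨f, hf0, _, hfdiv⟩ := G.walk_flow hvo
    refine ⟨f, hf0, fun w => ?_⟩
    rw [hfdiv w, if_neg (G.hidden_ne_of_VO hoO)]
    ring
  choose F hF0 hFdiv using hplus
  choose K hK0 hKdiv using hminus
  set x : G.Edge → ℝ :=
    ∑ v : G.Hidden, (max (c v) 0 • F v + max (-(c v)) 0 • K v) with hx
  have hx0 : ∀ e, 0 ≤ x e := by
    intro e
    rw [hx, Finset.sum_apply]
    refine Finset.sum_nonneg fun v _ => ?_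
    simp only [Pi.add_apply, Pi.smul_apply, smul_eq_mul]
    exact add_nonneg (mul_nonneg (le_max_right _ _) (hF0 v e))
      (mul_nonneg (le_max_right _ _) (hK0 v e))
  refine ⟨(WithLp.toLp 2 (fun e => Real.sqrt (x e)) : EuclideanSpace ℝ G.Edge), ?_⟩
  show G.B.mulVec (fun e => Real.sqrt (x e) ^ 2) = c
  have hsq : (fun e : G.Edge => Real.sqrt (x e) ^ 2) = x :=
    funext fun e => Real.sq_sqrt (hx0 e)
  rw [hsq]
  funext w
  rw [hx, ← Matrix.mulVecLin_apply, map_sum, Finset.sum_apply]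
  have hterm : ∀ v : G.Hidden,
      (G.B.mulVecLin (max (c v) 0 • F v + max (-(c v)) 0 • K v)) w
        = if w = v then c v else 0 := by
    intro v
    rw [Matrix.mulVecLin_apply, mulVec_add', mulVec_smul', mulVec_smul',
      hFdiv v w, hKdiv v w]
    by_cases hwv : w = v
    · have hcoe : (w : G.V) = (v : G.V) := congrArg Subtype.val hwv
      rw [if_pos hwv, if_pos hcoe]
      rcases le_total 0 (c v) with h | h
      · rw [max_eq_left h, max_eq_right (by linarith)]; ring
      · rw [max_eq_right h, max_eq_left (by linarith)]; ring
    · have hcoe : (w : G.V) ≠ (v : G.V) := fun h => hwv (Subtype.ext h)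
      rw [if_neg hwv, if_neg hcoe]
      ring
  rw [Finset.sum_congr rfl (fun v _ => hterm v), Finset.sum_ite_eq]
  simp

end DagNet

/-- if every hidden node lies on a directed path from an input
to an output node and has at least two incoming and two outgoing edges
(no bottleneck nodes), then `H_G(c)` is connected for every `c`. -/
theorem statement6 (G : DagNet)
    (hpath : ∀ v ∈ G.hidden, ∃ i ∈ G.VI, ∃ o ∈ G.VO,
      G.Reaches i v ∧ G.Reaches v o)
    (hnb : ∀ v ∈ G.hidden,
      2 ≤ (G.edges.filter (fun e => e.2 = v)).card ∧
      2 ≤ (G.edges.filter (fun e => e.1 = v)).card)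
    (c : G.Hidden → ℝ) :
    IsConnected (G.invariantSet c) := by
  obtain ⟨θ0, hθ0⟩ := G.invariantSet_nonempty hpath c
  apply IsPathConnected.isConnected
  refine ⟨θ0, hθ0, ?_⟩
  intro y hy
  have h0 := G.joined_abs hpath hnb _ θ0 hθ0 rfl
  have h1 := G.joined_abs hpath hnb _ y hy rfl
  have h2 : JoinedIn (G.invariantSet c) (WithLp.toLp 2 (fun f => |θ0 f|))
      (WithLp.toLp 2 (fun f => |y f|)) :=
    G.joined_nonneg h0.target_mem h1.target_mem (fun f => abs_nonneg _)
      (fun f => abs_nonneg _)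
  exact (h0.trans h2).trans h1.symm
end
end

section
/- Suppose G is a fully-connected multilayer perceptron: its node set V is partitioned into layers L_0 = V_I, L_1, …, L_k, L_{k+1} = V_O with k ≥ 1, its edge set E consists exactly of all pairs (u, w) with u ∈ L_i and w ∈ L_{i+1} for 0 ≤ i ≤ k, and every hidden layer satisfies |L_i| ≥ 2 for 1 ≤ i ≤ k. Then for every c ∈ ℝ^{Ṽ}, the invariant set H_G(c) is a connected subset of ℝ^E if and only if c_v ≥ 0 for every out-bottleneck v and c_v ≤ 0 for every in-bottleneck v. -/
noncomputable section

open Matrix Finset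

open Classical in
/-- sign lift -/
def sqLift (G : DagNet) (ε x : G.Edge → ℝ) : EuclideanSpace ℝ G.Edge :=
  WithLp.toLp 2 fun e => ε e * Real.sqrt (x e)

def IsUnitSign (G : DagNet) (ε : G.Edge → ℝ) : Prop := ∀ e, ε e = 1 ∨ ε e = -1

lemma sq_sqLift (G : DagNet) {ε x : G.Edge → ℝ} (hε : IsUnitSign G ε)
    (hx : ∀ e, 0 ≤ x e) : (fun e => sqLift G ε x e ^ 2) = x := by
  funext e
  have h1 : ε e ^ 2 = 1 := by rcases hε e with h | h <;> rw [h] <;> norm_num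
  simp only [sqLift, PiLp.toLp_apply, mul_pow, h1, one_mul, Real.sq_sqrt (hx e)]

lemma sqLift_mem (G : DagNet) {c : G.Hidden → ℝ} {ε x : G.Edge → ℝ}
    (hε : IsUnitSign G ε) (hx : ∀ e, 0 ≤ x e) (hxc : G.B.mulVec x = c) :
    sqLift G ε x ∈ G.invariantSet c := by
  show G.B.mulVec _ = c
  rw [sq_sqLift G hε hx, hxc]

lemma joined_sqLift (G : DagNet) {c : G.Hidden → ℝ} {ε x y : G.Edge → ℝ}
    (hε : IsUnitSign G ε) (hx : ∀ e, 0 ≤ x e) (hxc : G.B.mulVec x = c)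
    (hy : ∀ e, 0 ≤ y e) (hyc : G.B.mulVec y = c) :
    JoinedIn (G.invariantSet c) (sqLift G ε x) (sqLift G ε y) := by
  set f : unitInterval → EuclideanSpace ℝ G.Edge :=
    fun t => sqLift G ε (fun e => (1 - (t : ℝ)) * x e + (t : ℝ) * y e) with hf
  have hcont : Continuous f := by
    simp only [hf, sqLift]
    fun_prop
  have hmem : ∀ t, f t ∈ G.invariantSet c := by
    intro t
    apply sqLift_mem G hε
    · intro e
      have h1 : (0:ℝ) ≤ 1 - (t:ℝ) := by
        have := t.2.2; linarith
      exact add_nonneg (mul_nonneg h1 (hx e)) (mul_nonneg t.2.1 (hy e))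
    · have : (fun e => (1 - (t : ℝ)) * x e + (t : ℝ) * y e)
          = (1 - (t:ℝ)) • x + (t:ℝ) • y := by
        funext e; simp [smul_eq_mul]
      rw [this, Matrix.mulVec_add, Matrix.mulVec_smul, Matrix.mulVec_smul, hxc, hyc]
      funext w
      simp [smul_eq_mul]
      ring
  have h0 : f 0 = sqLift G ε x := by
    simp only [hf, sqLift]; congr 1; funext e; norm_num
  have h1 : f 1 = sqLift G ε y := by
    simp only [hf, sqLift]; congr 1; funext e; norm_num
  exact ⟨⟨⟨f, hcont⟩, h0, h1⟩, fun t => hmem t⟩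

lemma joined_flip (G : DagNet) {c : G.Hidden → ℝ} {ε ε' x : G.Edge → ℝ} {e₀ : G.Edge}
    (hε : IsUnitSign G ε) (hε' : IsUnitSign G ε') (hdiff : ∀ e, e ≠ e₀ → ε e = ε' e)
    (hx : ∀ e, 0 ≤ x e) (hxc : G.B.mulVec x = c)
    {y : G.Edge → ℝ} (hy : ∀ e, 0 ≤ y e) (hyc : G.B.mulVec y = c) (hy0 : y e₀ = 0) :
    JoinedIn (G.invariantSet c) (sqLift G ε x) (sqLift G ε' x) := by
  have key : sqLift G ε y = sqLift G ε' y := by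
    ext e
    by_cases h : e = e₀
    · subst h; simp [sqLift, PiLp.toLp_apply, hy0]
    · simp [sqLift, PiLp.toLp_apply, hdiff e h]
  have h1 := joined_sqLift G hε hx hxc hy hyc
  have h2 := joined_sqLift G hε' hy hyc hx hxc
  rw [key] at h1
  exact h1.trans h2

lemma joined_signs (G : DagNet) {c : G.Hidden → ℝ}
    (hvan : ∀ e₀ : G.Edge, ∃ y : G.Edge → ℝ,
      (∀ e, 0 ≤ y e) ∧ G.B.mulVec y = c ∧ y e₀ = 0)
    {x : G.Edge → ℝ} (hx : ∀ e, 0 ≤ x e) (hxc : G.B.mulVec x = c)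
    (s : Finset G.Edge) :
    ∀ ε ε' : G.Edge → ℝ, IsUnitSign G ε → IsUnitSign G ε' →
      (∀ e ∉ s, ε e = ε' e) →
      JoinedIn (G.invariantSet c) (sqLift G ε x) (sqLift G ε' x) := by
  classical
  induction s using Finset.induction_on with
  | empty =>
    intro ε ε' hε hε' hagree
    have : sqLift G ε x = sqLift G ε' x := by
      ext e; simp [sqLift, PiLp.toLp_apply, hagree e (Finset.notMem_empty e)]
    rw [this]
    exact JoinedIn.refl (sqLift_mem G hε' hx hxc)
  | insert a s ha IH =>
    intro ε ε' hε hε' hagree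
    set ε'' : G.Edge → ℝ := Function.update ε a (ε' a) with hε''def
    have hε'' : IsUnitSign G ε'' := by
      intro e
      by_cases h : e = a
      · rw [h, hε''def]; simp only [Function.update_self]; exact hε' a
      · simp [hε''def, Function.update_of_ne h]; exact hε e
    obtain ⟨y, hy, hyc, hy0⟩ := hvan a
    have step1 : JoinedIn (G.invariantSet c) (sqLift G ε x) (sqLift G ε'' x) := by
      apply joined_flip G hε hε'' _ hx hxc hy hyc hy0
      intro e he
      simp [hε''def, Function.update_of_ne he]
    have step2 : JoinedIn (G.invariantSet c) (sqLift G ε'' x) (sqLift G ε' x) := by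
      apply IH ε'' ε' hε'' hε'
      intro e he
      by_cases h : e = a
      · rw [h, hε''def]; simp
      · have : e ∉ insert a s := by simp [h, he]
        simp [hε''def, Function.update_of_ne h, hagree e this]
    exact step1.trans step2

lemma sign_repr (G : DagNet) (θ : EuclideanSpace ℝ G.Edge) :
    ∃ ε : G.Edge → ℝ, IsUnitSign G ε ∧ θ = sqLift G ε (fun e => θ e ^ 2) := by
  classical
  refine ⟨fun e => if θ e < 0 then -1 else 1, fun e => by by_cases h : θ e < 0 <;> simp [h], ?_⟩
  ext e
  by_cases h : θ e < 0
  · simp only [sqLift, PiLp.toLp_apply, if_pos h]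
    rw [Real.sqrt_sq_eq_abs, abs_of_neg h]; ring
  · simp only [sqLift, PiLp.toLp_apply, if_neg h]
    rw [Real.sqrt_sq_eq_abs, abs_of_nonneg (not_lt.1 h)]; ring

lemma pathconn_invariantSet (G : DagNet) {c : G.Hidden → ℝ}
    (hne : ∃ x : G.Edge → ℝ, (∀ e, 0 ≤ x e) ∧ G.B.mulVec x = c)
    (hvan : ∀ e₀ : G.Edge, ∃ y : G.Edge → ℝ,
      (∀ e, 0 ≤ y e) ∧ G.B.mulVec y = c ∧ y e₀ = 0) :
    IsPathConnected (G.invariantSet c) := by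
  obtain ⟨x₀, hx₀, hx₀c⟩ := hne
  have hone : IsUnitSign G (fun _ => 1) := fun e => Or.inl rfl
  refine ⟨sqLift G (fun _ => 1) x₀, sqLift_mem G hone hx₀ hx₀c, ?_⟩
  intro θ hθ
  obtain ⟨ε, hε, hrepr⟩ := sign_repr G θ
  have hx : ∀ e, 0 ≤ θ e ^ 2 := fun e => sq_nonneg _
  have hxc : G.B.mulVec (fun e => θ e ^ 2) = c := hθ
  have j1 : JoinedIn (G.invariantSet c) (sqLift G (fun _ => 1) x₀) (sqLift G ε x₀) :=
    joined_signs G hvan hx₀ hx₀c Finset.univ (fun _ => 1) ε hone hε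
      (fun e he => absurd (Finset.mem_univ e) he)
  have j2 : JoinedIn (G.invariantSet c) (sqLift G ε x₀) (sqLift G ε (fun e => θ e ^ 2)) :=
    joined_sqLift G hε hx₀ hx₀c hx hxc
  rw [← hrepr] at j2
  exact j1.trans j2

lemma mulVec_split (G : DagNet) (hns : ∀ e ∈ G.edges, Prod.fst e ≠ Prod.snd e)
    (y : G.Edge → ℝ) (w : G.Hidden) :
    G.B.mulVec y w =
      (∑ e ∈ univ.filter (fun e : G.Edge => (e : G.V × G.V).2 = (w : G.V)), y e)
      - ∑ e ∈ univ.filter (fun e : G.Edge => (e : G.V × G.V).1 = (w : G.V)), y e := by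
  classical
  rw [Matrix.mulVec, dotProduct, Finset.sum_filter, Finset.sum_filter,
    ← Finset.sum_sub_distrib]
  apply Finset.sum_congr rfl
  intro e _
  have hne : (e : G.V × G.V).1 ≠ (e : G.V × G.V).2 := hns e e.2
  by_cases h2 : (e : G.V × G.V).2 = (w : G.V)
  · have h1 : ¬ (e : G.V × G.V).1 = (w : G.V) := fun h1 => hne (h1.trans h2.symm)
    simp [DagNet.B, h2, h1]
  · by_cases h1 : (e : G.V × G.V).1 = (w : G.V) <;> simp [DagNet.B, h2, h1]

lemma not_connected_of_forced_sign (G : DagNet) {c : G.Hidden → ℝ} (e₀ : G.Edge)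
    {θ₀ : EuclideanSpace ℝ G.Edge} (hθ₀ : θ₀ ∈ G.invariantSet c)
    (hnz : ∀ θ ∈ G.invariantSet c, θ e₀ ≠ 0) : ¬ IsConnected (G.invariantSet c) := by
  classical
  intro hconn
  set θ₁ : EuclideanSpace ℝ G.Edge :=
    WithLp.toLp 2 (fun e => if e = e₀ then -(θ₀ e₀) else θ₀ e) with hθ₁def
  have hθ₁ : θ₁ ∈ G.invariantSet c := by
    have hsq : (fun e => θ₁ e ^ 2) = (fun e => θ₀ e ^ 2) := by
      funext e
      by_cases h : e = e₀
      · subst h; simp [hθ₁def]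
      · simp [hθ₁def, h]
    show G.B.mulVec _ = c
    rw [hsq]; exact hθ₀
  have hev : Continuous (fun θ : EuclideanSpace ℝ G.Edge => θ e₀) := by fun_prop
  have hU : IsOpen {θ : EuclideanSpace ℝ G.Edge | 0 < θ e₀} :=
    isOpen_lt continuous_const hev
  have hV : IsOpen {θ : EuclideanSpace ℝ G.Edge | θ e₀ < 0} :=
    isOpen_lt hev continuous_const
  have hcover : G.invariantSet c ⊆
      {θ : EuclideanSpace ℝ G.Edge | 0 < θ e₀} ∪ {θ | θ e₀ < 0} := by
    intro θ hθ
    rcases (hnz θ hθ).lt_or_gt with h | h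
    · exact Or.inr h
    · exact Or.inl h
  have hne01 : θ₁ e₀ = -(θ₀ e₀) := by simp [hθ₁def]
  have hposmem : (G.invariantSet c ∩ {θ : EuclideanSpace ℝ G.Edge | 0 < θ e₀}).Nonempty := by
    rcases (hnz θ₀ hθ₀).lt_or_gt with h | h
    · exact ⟨θ₁, hθ₁, by simp only [Set.mem_setOf_eq, hne01]; linarith⟩
    · exact ⟨θ₀, hθ₀, h⟩
  have hnegmem : (G.invariantSet c ∩ {θ : EuclideanSpace ℝ G.Edge | θ e₀ < 0}).Nonempty := by
    rcases (hnz θ₀ hθ₀).lt_or_gt with h | h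
    · exact ⟨θ₀, hθ₀, h⟩
    · exact ⟨θ₁, hθ₁, by simp only [Set.mem_setOf_eq, hne01]; linarith⟩
  obtain ⟨θ, -, h1, h2⟩ := hconn.isPreconnected _ _ hU hV hcover hposmem hnegmem
  simp only [Set.mem_setOf_eq] at h1 h2
  exact absurd (h1.trans h2) (lt_irrefl _)

/-! ### MLP flow construction -/

def vertF (G : DagNet) (layer : G.V → ℕ) (g : ℕ → G.V) (v : G.V) (j : ℕ) : G.V :=
  if j = layer v then v else g j

def edgeFlow (G : DagNet) (layer : G.V → ℕ) (g : ℕ → G.V) (v : G.V) (j : ℕ) :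
    G.Edge → ℝ :=
  if h : (vertF G layer g v j, vertF G layer g v (j+1)) ∈ G.edges then
    Pi.single (⟨_, h⟩ : G.Edge) 1 else 0

open Classical in
def nodeFlow (G : DagNet) (k : ℕ) (layer : G.V → ℕ) (g : ℕ → G.V) (c : G.Hidden → ℝ)
    (v : G.Hidden) : G.Edge → ℝ :=
  if 0 ≤ c v then c v • ∑ j ∈ Finset.range (layer v.1), edgeFlow G layer g v.1 j
  else (-(c v)) • ∑ j ∈ Finset.Ico (layer v.1) (k+1), edgeFlow G layer g v.1 j

lemma hidden_layer_bounds (G : DagNet) (k : ℕ) (layer : G.V → ℕ)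
    (hle : ∀ v : G.V, layer v ≤ k + 1)
    (hVI : G.VI = Finset.univ.filter (fun v => layer v = 0))
    (hVO : G.VO = Finset.univ.filter (fun v => layer v = k + 1))
    (w : G.Hidden) : 1 ≤ layer w.1 ∧ layer w.1 ≤ k := by
  have h := w.2
  simp only [DagNet.hidden, Finset.mem_sdiff, Finset.mem_union, Finset.mem_univ,
    true_and, hVI, hVO, Finset.mem_filter, not_or] at h
  have := hle w.1
  omega

lemma layer_vertF (G : DagNet) {k : ℕ} (layer : G.V → ℕ) (g : ℕ → G.V)
    (hg : ∀ j ≤ k + 1, layer (g j) = j) (v : G.V) {j : ℕ} (hj : j ≤ k + 1) :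
    layer (vertF G layer g v j) = j := by
  unfold vertF
  by_cases h : j = layer v
  · rw [if_pos h, ← h]
  · rw [if_neg h]; exact hg j hj

lemma edgeFlow_nonneg (G : DagNet) (layer : G.V → ℕ) (g : ℕ → G.V) (v : G.V) (j : ℕ)
    (e : G.Edge) : 0 ≤ edgeFlow G layer g v j e := by
  unfold edgeFlow
  split
  · rw [Pi.single_apply]; split <;> norm_num
  · exact le_refl 0

lemma mulVec_edgeFlow (G : DagNet) (k : ℕ) (layer : G.V → ℕ) (g : ℕ → G.V)
    (hE : ∀ a b : G.V, (a, b) ∈ G.edges ↔ layer b = layer a + 1)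
    (hg : ∀ j ≤ k + 1, layer (g j) = j) (v : G.V) {j : ℕ} (hj : j ≤ k) :
    G.B.mulVec (edgeFlow G layer g v j) = fun w : G.Hidden =>
      (if vertF G layer g v (j+1) = (w : G.V) then (1:ℝ) else 0)
      - (if vertF G layer g v j = (w : G.V) then (1:ℝ) else 0) := by
  have hl1 : layer (vertF G layer g v j) = j := layer_vertF G layer g hg v (by omega)
  have hl2 : layer (vertF G layer g v (j+1)) = j + 1 :=
    layer_vertF G layer g hg v (by omega)
  have hmem : (vertF G layer g v j, vertF G layer g v (j+1)) ∈ G.edges :=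
    (hE _ _).2 (by rw [hl1, hl2])
  unfold edgeFlow
  rw [dif_pos hmem, Matrix.mulVec_single]
  funext w
  by_cases hq : vertF G layer g v (j+1) = (w : G.V)
  · have hp : vertF G layer g v j ≠ (w : G.V) := by
      intro hp
      rw [← hq] at hp
      have := congrArg layer hp
      rw [hl1, hl2] at this
      omega
    simp [DagNet.B, hq, hp]
  · by_cases hp : vertF G layer g v j = (w : G.V) <;> simp [DagNet.B, hq, hp]

lemma mulVec_nodeFlow (G : DagNet) (k : ℕ) (layer : G.V → ℕ) (g : ℕ → G.V)
    (c : G.Hidden → ℝ)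
    (hle : ∀ v : G.V, layer v ≤ k + 1)
    (hVI : G.VI = Finset.univ.filter (fun v => layer v = 0))
    (hVO : G.VO = Finset.univ.filter (fun v => layer v = k + 1))
    (hE : ∀ a b : G.V, (a, b) ∈ G.edges ↔ layer b = layer a + 1)
    (hg : ∀ j ≤ k + 1, layer (g j) = j) (v : G.Hidden) :
    G.B.mulVec (nodeFlow G k layer g c v) =
      fun w : G.Hidden => if w = v then c v else 0 := by
  classical
  obtain ⟨hv1, hvk⟩ := hidden_layer_bounds G k layer hle hVI hVO v
  have key : ∀ w : G.Hidden, ∀ (s : Finset ℕ), (∀ j ∈ s, j ≤ k) →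
      G.B.mulVec (∑ j ∈ s, edgeFlow G layer g v.1 j) w =
      ∑ j ∈ s, ((if vertF G layer g v.1 (j+1) = (w : G.V) then (1:ℝ) else 0)
        - (if vertF G layer g v.1 j = (w : G.V) then (1:ℝ) else 0)) := by
    intro w s hs
    rw [show G.B.mulVec (∑ j ∈ s, edgeFlow G layer g v.1 j)
        = ∑ j ∈ s, G.B.mulVec (edgeFlow G layer g v.1 j) by
      simp only [← Matrix.mulVecLin_apply, map_sum], Finset.sum_apply]
    apply Finset.sum_congr rfl
    intro j hj
    rw [mulVec_edgeFlow G k layer g hE hg v.1 (hs j hj)]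
  have hwb : ∀ w : G.Hidden, 1 ≤ layer w.1 ∧ layer w.1 ≤ k :=
    fun w => hidden_layer_bounds G k layer hle hVI hVO w
  have hvfi : ∀ w : G.Hidden,
      (if vertF G layer g v.1 (layer v.1) = (w : G.V) then (1:ℝ) else 0)
      = (if w = v then 1 else 0) := by
    intro w
    have h1 : vertF G layer g v.1 (layer v.1) = v.1 := by
      unfold vertF; rw [if_pos rfl]
    rw [h1]
    by_cases h : w = v
    · rw [h, if_pos rfl, if_pos rfl]
    · rw [if_neg h, if_neg (fun h2 => h (Subtype.ext h2.symm))]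
  have hvf0 : ∀ w : G.Hidden,
      (if vertF G layer g v.1 0 = (w : G.V) then (1:ℝ) else 0) = 0 := by
    intro w
    rw [if_neg]
    intro h
    have := congrArg layer h
    rw [layer_vertF G layer g hg v.1 (by omega)] at this
    have := (hwb w).1
    omega
  have hvfk1 : ∀ w : G.Hidden,
      (if vertF G layer g v.1 (k+1) = (w : G.V) then (1:ℝ) else 0) = 0 := by
    intro w
    rw [if_neg]
    intro h
    have := congrArg layer h
    rw [layer_vertF G layer g hg v.1 (by omega)] at this
    have := (hwb w).2
    omega
  funext w
  unfold nodeFlow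
  by_cases hc : 0 ≤ c v
  · rw [if_pos hc, Matrix.mulVec_smul, Pi.smul_apply, smul_eq_mul,
      key w _ (fun j hj => by have := Finset.mem_range.1 hj; omega),
      Finset.sum_range_sub (fun j => if vertF G layer g v.1 j = (w : G.V) then (1:ℝ) else 0),
      hvfi w, hvf0 w]
    by_cases h : w = v <;> simp [h]
  · rw [if_neg hc, Matrix.mulVec_smul, Pi.smul_apply, smul_eq_mul,
      key w _ (fun j hj => by have := (Finset.mem_Ico.1 hj).2; omega),
      Finset.sum_Ico_eq_sub _ (by omega : layer v.1 ≤ k + 1),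
      Finset.sum_range_sub (fun j => if vertF G layer g v.1 j = (w : G.V) then (1:ℝ) else 0),
      Finset.sum_range_sub (fun j => if vertF G layer g v.1 j = (w : G.V) then (1:ℝ) else 0),
      hvfi w, hvf0 w, hvfk1 w]
    by_cases h : w = v <;> simp [h]

lemma nodeFlow_nonneg (G : DagNet) (k : ℕ) (layer : G.V → ℕ) (g : ℕ → G.V)
    (c : G.Hidden → ℝ) (v : G.Hidden) (e : G.Edge) : 0 ≤ nodeFlow G k layer g c v e := by
  unfold nodeFlow
  split
  · rename_i hc
    rw [Pi.smul_apply, smul_eq_mul]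
    apply mul_nonneg hc
    rw [Finset.sum_apply]
    exact Finset.sum_nonneg fun j _ => edgeFlow_nonneg G layer g v.1 j e
  · rename_i hc
    rw [Pi.smul_apply, smul_eq_mul]
    push_neg at hc
    apply mul_nonneg (by linarith)
    rw [Finset.sum_apply]
    exact Finset.sum_nonneg fun j _ => edgeFlow_nonneg G layer g v.1 j e

lemma nodeFlow_support (G : DagNet) (k : ℕ) (layer : G.V → ℕ) (g : ℕ → G.V)
    (c : G.Hidden → ℝ) (v : G.Hidden) (e : G.Edge)
    (hne : nodeFlow G k layer g c v e ≠ 0) :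
    ∃ j : ℕ, ((0 < c v ∧ j < layer v.1) ∨ (c v < 0 ∧ layer v.1 ≤ j ∧ j ≤ k)) ∧
      (e : G.V × G.V) = (vertF G layer g v.1 j, vertF G layer g v.1 (j+1)) := by
  classical
  have hsup : ∀ (s : Finset ℕ), (∑ j ∈ s, edgeFlow G layer g v.1 j) e ≠ 0 →
      ∃ j ∈ s, (e : G.V × G.V) = (vertF G layer g v.1 j, vertF G layer g v.1 (j+1)) := by
    intro s hs
    rw [Finset.sum_apply] at hs
    obtain ⟨j, hj, hje⟩ := Finset.exists_ne_zero_of_sum_ne_zero hs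
    refine ⟨j, hj, ?_⟩
    unfold edgeFlow at hje
    by_cases hm : (vertF G layer g v.1 j, vertF G layer g v.1 (j+1)) ∈ G.edges
    · rw [dif_pos hm, Pi.single_apply] at hje
      split at hje
      · rename_i heq
        rw [heq]
      · exact absurd rfl hje
    · rw [dif_neg hm] at hje
      exact absurd rfl hje
  unfold nodeFlow at hne
  split at hne
  · rename_i hc
    rw [Pi.smul_apply, smul_eq_mul] at hne
    obtain ⟨hc0, hs⟩ := mul_ne_zero_iff.1 hne
    obtain ⟨j, hj, hje⟩ := hsup _ hs
    exact ⟨j, Or.inl ⟨lt_of_le_of_ne hc (Ne.symm hc0), Finset.mem_range.1 hj⟩, hje⟩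
  · rename_i hc
    push_neg at hc
    rw [Pi.smul_apply, smul_eq_mul] at hne
    obtain ⟨-, hs⟩ := mul_ne_zero_iff.1 hne
    obtain ⟨j, hj, hje⟩ := hsup _ hs
    have := Finset.mem_Ico.1 hj
    exact ⟨j, Or.inr ⟨hc, this.1, by omega⟩, hje⟩

lemma exists_flow (G : DagNet) (k : ℕ) (layer : G.V → ℕ) (c : G.Hidden → ℝ)
    (hle : ∀ v : G.V, layer v ≤ k + 1)
    (hVI : G.VI = Finset.univ.filter (fun v => layer v = 0))
    (hVO : G.VO = Finset.univ.filter (fun v => layer v = k + 1))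
    (hE : ∀ a b : G.V, (a, b) ∈ G.edges ↔ layer b = layer a + 1)
    (g : ℕ → G.V) (hg : ∀ j ≤ k + 1, layer (g j) = j) :
    ∃ x : G.Edge → ℝ, (∀ e, 0 ≤ x e) ∧ G.B.mulVec x = c ∧
      (∀ e : G.Edge, x e ≠ 0 → ∃ v : G.Hidden, ∃ j : ℕ,
        ((0 < c v ∧ j < layer v.1) ∨ (c v < 0 ∧ layer v.1 ≤ j ∧ j ≤ k)) ∧
        (e : G.V × G.V) = (vertF G layer g v.1 j, vertF G layer g v.1 (j+1))) := by
  classical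
  refine ⟨∑ v : G.Hidden, nodeFlow G k layer g c v, ?_, ?_, ?_⟩
  · intro e
    rw [Finset.sum_apply]
    exact Finset.sum_nonneg fun v _ => nodeFlow_nonneg G k layer g c v e
  · rw [show G.B.mulVec (∑ v : G.Hidden, nodeFlow G k layer g c v)
        = ∑ v : G.Hidden, G.B.mulVec (nodeFlow G k layer g c v) by
      simp only [← Matrix.mulVecLin_apply, map_sum]]
    funext w
    rw [Finset.sum_apply]
    rw [Finset.sum_congr rfl (fun v _ => by
      rw [mulVec_nodeFlow G k layer g c hle hVI hVO hE hg v])]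
    rw [Finset.sum_ite_eq Finset.univ w c, if_pos (Finset.mem_univ w)]
  · intro e he
    rw [Finset.sum_apply] at he
    obtain ⟨v, -, hv⟩ := Finset.exists_ne_zero_of_sum_ne_zero he
    obtain ⟨j, h1, h2⟩ := nodeFlow_support G k layer g c v e hv
    exact ⟨v, j, h1, h2⟩

lemma exists_spine (G : DagNet) (k : ℕ) (layer : G.V → ℕ)
    (hNE : ∀ i ≤ k + 1, (Finset.univ.filter (fun v : G.V => layer v = i)).Nonempty) :
    ∃ g : ℕ → G.V, ∀ j ≤ k + 1, layer (g j) = j := by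
  classical
  have h : ∀ j : ℕ, ∃ w : G.V, j ≤ k + 1 → layer w = j := by
    intro j
    by_cases hj : j ≤ k + 1
    · obtain ⟨w, hw⟩ := hNE j hj
      exact ⟨w, fun _ => (Finset.mem_filter.1 hw).2⟩
    · obtain ⟨w, hw⟩ := hNE 0 (by omega)
      exact ⟨w, fun h => absurd h hj⟩
  choose g hg using h
  exact ⟨g, hg⟩

lemma exists_spine_avoid (G : DagNet) (k : ℕ) (layer : G.V → ℕ) (a b : G.V)
    (hab : layer b = layer a + 1)
    (hNE : ∀ i ≤ k + 1, (Finset.univ.filter (fun v : G.V => layer v = i)).Nonempty) :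
    ∃ g : ℕ → G.V, (∀ j ≤ k + 1, layer (g j) = j) ∧
      (∀ j : ℕ, 2 ≤ (Finset.univ.filter (fun v : G.V => layer v = j)).card →
        g j ≠ a ∧ g j ≠ b) := by
  classical
  have h : ∀ j : ℕ, ∃ w : G.V, (j ≤ k + 1 → layer w = j) ∧
      (2 ≤ (Finset.univ.filter (fun v : G.V => layer v = j)).card → w ≠ a ∧ w ≠ b) := by
    intro j
    set L := Finset.univ.filter (fun v : G.V => layer v = j) with hL
    by_cases h2 : 2 ≤ L.card
    · have hint : (L ∩ {a, b}).card ≤ 1 := by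
        apply Finset.card_le_one.2
        intro x hx y hy
        obtain ⟨hxL, hxab⟩ := Finset.mem_inter.1 hx
        obtain ⟨hyL, hyab⟩ := Finset.mem_inter.1 hy
        have hxl : layer x = j := (Finset.mem_filter.1 hxL).2
        have hyl : layer y = j := (Finset.mem_filter.1 hyL).2
        simp only [Finset.mem_insert, Finset.mem_singleton] at hxab hyab
        rcases hxab with rfl | rfl <;> rcases hyab with rfl | rfl <;>
          first | rfl | omega
      have hsub : L \ {a, b} = L \ (L ∩ {a, b}) := by
        ext z
        simp only [Finset.mem_sdiff, Finset.mem_inter]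
        tauto
      have hcard : 1 ≤ (L \ {a, b}).card := by
        rw [hsub, Finset.card_sdiff_of_subset Finset.inter_subset_left]
        omega
      have hne2 : (L \ ({a, b} : Finset G.V)).Nonempty := Finset.card_pos.1 (by omega)
      obtain ⟨w, hw⟩ := hne2
      obtain ⟨hwL, hwab⟩ := Finset.mem_sdiff.1 hw
      simp only [Finset.mem_insert, Finset.mem_singleton, not_or] at hwab
      exact ⟨w, fun _ => (Finset.mem_filter.1 hwL).2, fun _ => hwab⟩
    · by_cases hj : j ≤ k + 1
      · obtain ⟨w, hw⟩ := hNE j hj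
        exact ⟨w, fun _ => (Finset.mem_filter.1 hw).2, fun h => absurd h h2⟩
      · obtain ⟨w, hw⟩ := hNE 0 (by omega)
        exact ⟨w, fun h => absurd h hj, fun h => absurd h h2⟩
  choose g hg1 hg2 using h
  exact ⟨g, hg1, hg2⟩

lemma inBottleneck_of_card_one (G : DagNet) (k : ℕ) (layer : G.V → ℕ)
    (hE : ∀ a b : G.V, (a, b) ∈ G.edges ↔ layer b = layer a + 1)
    (h1 : (Finset.univ.filter (fun u : G.V => layer u = 0)).card = 1)
    (v : G.V) (hv : v ∈ G.hidden) (hlv : layer v = 1) : G.InBottleneck v := by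
  classical
  obtain ⟨u0, hu0⟩ := Finset.card_eq_one.1 h1
  have hu0mem : u0 ∈ Finset.univ.filter (fun u : G.V => layer u = 0) := by
    rw [hu0]; exact Finset.mem_singleton_self u0
  have hu0l : layer u0 = 0 := (Finset.mem_filter.1 hu0mem).2
  refine ⟨hv, ?_⟩
  rw [Finset.card_eq_one]
  refine ⟨(u0, v), ?_⟩
  ext ⟨p, q⟩
  simp only [Finset.mem_filter, Finset.mem_singleton, Prod.mk.injEq]
  constructor
  · rintro ⟨hpq, hq⟩
    have hl : layer q = layer p + 1 := (hE p q).1 hpq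
    have hp0 : layer p = 0 := by rw [hq, hlv] at hl; omega
    have : p ∈ Finset.univ.filter (fun u : G.V => layer u = 0) :=
      Finset.mem_filter.2 ⟨Finset.mem_univ p, hp0⟩
    rw [hu0] at this
    exact ⟨Finset.mem_singleton.1 this, hq⟩
  · rintro ⟨hp', hq'⟩
    rw [hp', hq']
    exact ⟨(hE u0 v).2 (by omega), rfl⟩

lemma outBottleneck_of_card_one (G : DagNet) (k : ℕ) (layer : G.V → ℕ)
    (hE : ∀ a b : G.V, (a, b) ∈ G.edges ↔ layer b = layer a + 1)
    (h1 : (Finset.univ.filter (fun u : G.V => layer u = k + 1)).card = 1)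
    (v : G.V) (hv : v ∈ G.hidden) (hlv : layer v = k) : G.OutBottleneck v := by
  classical
  obtain ⟨u0, hu0⟩ := Finset.card_eq_one.1 h1
  have hu0mem : u0 ∈ Finset.univ.filter (fun u : G.V => layer u = k + 1) := by
    rw [hu0]; exact Finset.mem_singleton_self u0
  have hu0l : layer u0 = k + 1 := (Finset.mem_filter.1 hu0mem).2
  refine ⟨hv, ?_⟩
  rw [Finset.card_eq_one]
  refine ⟨(v, u0), ?_⟩
  ext ⟨p, q⟩
  simp only [Finset.mem_filter, Finset.mem_singleton, Prod.mk.injEq]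
  constructor
  · rintro ⟨hpq, hp⟩
    have hl : layer q = layer p + 1 := (hE p q).1 hpq
    have hqk : layer q = k + 1 := by rw [hp, hlv] at hl; omega
    have : q ∈ Finset.univ.filter (fun u : G.V => layer u = k + 1) :=
      Finset.mem_filter.2 ⟨Finset.mem_univ q, hqk⟩
    rw [hu0] at this
    exact ⟨hp, Finset.mem_singleton.1 this⟩
  · rintro ⟨hp', hq'⟩
    rw [hp', hq']
    exact ⟨(hE v u0).2 (by omega), rfl⟩

lemma exists_flow_avoid (G : DagNet) (k : ℕ) (hk : 1 ≤ k) (layer : G.V → ℕ)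
    (c : G.Hidden → ℝ)
    (hle : ∀ v : G.V, layer v ≤ k + 1)
    (hVI : G.VI = Finset.univ.filter (fun v => layer v = 0))
    (hVO : G.VO = Finset.univ.filter (fun v => layer v = k + 1))
    (hE : ∀ a b : G.V, (a, b) ∈ G.edges ↔ layer b = layer a + 1)
    (hNE : ∀ i ≤ k + 1, (Finset.univ.filter (fun v : G.V => layer v = i)).Nonempty)
    (hbig : ∀ i, 1 ≤ i → i ≤ k →
      2 ≤ (Finset.univ.filter (fun v : G.V => layer v = i)).card)
    (hout : ∀ v : G.V, ∀ h : G.OutBottleneck v, 0 ≤ c ⟨v, h.1⟩)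
    (hin : ∀ v : G.V, ∀ h : G.InBottleneck v, c ⟨v, h.1⟩ ≤ 0)
    (e₀ : G.Edge) :
    ∃ x : G.Edge → ℝ, (∀ e, 0 ≤ x e) ∧ G.B.mulVec x = c ∧ x e₀ = 0 := by
  classical
  set a := (e₀ : G.V × G.V).1 with hadef
  set b := (e₀ : G.V × G.V).2 with hbdef
  have he₀ : (a, b) ∈ G.edges := by rw [hadef, hbdef, Prod.mk.eta]; exact e₀.2
  have hab : layer b = layer a + 1 := (hE a b).1 he₀
  have hbk : layer b ≤ k + 1 := hle b
  obtain ⟨g, hg, hgav⟩ := exists_spine_avoid G k layer a b hab hNE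
  obtain ⟨x, hx0, hxc, hsupp⟩ := exists_flow G k layer c hle hVI hVO hE g hg
  refine ⟨x, hx0, hxc, ?_⟩
  by_contra hxe
  obtain ⟨v, j, hcase, heq⟩ := hsupp e₀ hxe
  have ha : a = vertF G layer g v.1 j := congrArg Prod.fst heq
  have hb : b = vertF G layer g v.1 (j+1) := congrArg Prod.snd heq
  obtain ⟨hv1, hv2⟩ := hidden_layer_bounds G k layer hle hVI hVO v
  rcases hcase with ⟨hcpos, hji⟩ | ⟨hcneg, hij, hjk⟩
  · -- upward path case: j < layer v
    by_cases hj1 : j + 1 < layer v.1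
    · have hvf : vertF G layer g v.1 (j+1) = g (j+1) := by
        unfold vertF; rw [if_neg (by omega)]
      exact (hgav (j+1) (hbig (j+1) (by omega) (by omega))).2 (by rw [← hvf, ← hb])
    · have hji1 : j + 1 = layer v.1 := by omega
      have hbv : b = v.1 := by
        rw [hb]; unfold vertF; rw [if_pos hji1]
      have hav : a = g j := by
        rw [ha]; unfold vertF; rw [if_neg (by omega)]
      by_cases hjpos : 1 ≤ j
      · exact (hgav j (hbig j hjpos (by omega))).1 hav.symm
      · have hj0 : j = 0 := by omega
        rw [hj0] at hav
        by_cases h20 : 2 ≤ (Finset.univ.filter (fun u : G.V => layer u = 0)).card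
        · exact (hgav 0 h20).1 hav.symm
        · have hc1 : (Finset.univ.filter (fun u : G.V => layer u = 0)).card = 1 := by
            obtain ⟨w, hw⟩ := hNE 0 (by omega)
            have := Finset.card_pos.2 ⟨w, hw⟩
            omega
          have hinb : G.InBottleneck v.1 :=
            inBottleneck_of_card_one G k layer hE hc1 v.1 v.2 (by omega)
          have hcle := hin v.1 hinb
          have hvv : (⟨v.1, hinb.1⟩ : G.Hidden) = v := Subtype.ext rfl
          rw [hvv] at hcle
          linarith
  · -- downward path case: layer v ≤ j ≤ k
    by_cases hji : layer v.1 < j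
    · have hvf : vertF G layer g v.1 j = g j := by
        unfold vertF; rw [if_neg (by omega)]
      exact (hgav j (hbig j (by omega) hjk)).1 (by rw [← hvf, ← ha])
    · have hjieq : j = layer v.1 := by omega
      have hva : a = v.1 := by
        rw [ha]; unfold vertF; rw [if_pos hjieq]
      have hbg : vertF G layer g v.1 (j+1) = g (j+1) := by
        unfold vertF; rw [if_neg (by omega)]
      by_cases hjk' : j + 1 ≤ k
      · exact (hgav (j+1) (hbig (j+1) (by omega) hjk')).2 (by rw [← hbg, ← hb])
      · have hjk1 : j = k := by omega
        by_cases h2k : 2 ≤ (Finset.univ.filter (fun u : G.V => layer u = k + 1)).card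
        · have : 2 ≤ (Finset.univ.filter (fun u : G.V => layer u = j + 1)).card := by
            rw [hjk1]; exact h2k
          exact (hgav (j+1) this).2 (by rw [← hbg, ← hb])
        · have hc1 : (Finset.univ.filter (fun u : G.V => layer u = k + 1)).card = 1 := by
            obtain ⟨w, hw⟩ := hNE (k+1) (by omega)
            have := Finset.card_pos.2 ⟨w, hw⟩
            omega
          have houtb : G.OutBottleneck v.1 :=
            outBottleneck_of_card_one G k layer hE hc1 v.1 v.2 (by omega)
          have hcge := hout v.1 houtb
          have hvv : (⟨v.1, houtb.1⟩ : G.Hidden) = v := Subtype.ext rfl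
          rw [hvv] at hcge
          linarith

lemma forced_sign_out (G : DagNet) (layer : G.V → ℕ)
    (hE : ∀ a b : G.V, (a, b) ∈ G.edges ↔ layer b = layer a + 1)
    (c : G.Hidden → ℝ) (v : G.V) (hob : G.OutBottleneck v)
    (hcneg : c ⟨v, hob.1⟩ < 0) :
    ∃ e₀ : G.Edge, ∀ θ ∈ G.invariantSet c, θ e₀ ≠ 0 := by
  classical
  have hns : ∀ e ∈ G.edges, Prod.fst e ≠ Prod.snd e := by
    intro e he h
    have h2 := (hE e.1 e.2).1 (by rwa [Prod.mk.eta])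
    rw [h] at h2
    omega
  obtain ⟨ev, hev⟩ := Finset.card_eq_one.1 hob.2
  have hevmem : ev ∈ G.edges.filter (fun e => e.1 = v) := by
    rw [hev]; exact Finset.mem_singleton_self ev
  obtain ⟨hevE, hev1⟩ := Finset.mem_filter.1 hevmem
  refine ⟨⟨ev, hevE⟩, ?_⟩
  intro θ hθ h0
  have hw := congrFun hθ ⟨v, hob.1⟩
  rw [mulVec_split G hns (fun e => θ e ^ 2) ⟨v, hob.1⟩] at hw
  have hfil : Finset.univ.filter
      (fun e : G.Edge => (e : G.V × G.V).1 = ((⟨v, hob.1⟩ : G.Hidden) : G.V))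
      = {⟨ev, hevE⟩} := by
    ext e
    simp only [Finset.mem_filter, Finset.mem_univ, true_and, Finset.mem_singleton]
    constructor
    · intro h
      have : (e : G.V × G.V) ∈ G.edges.filter (fun e => e.1 = v) :=
        Finset.mem_filter.2 ⟨e.2, h⟩
      rw [hev] at this
      exact Subtype.ext (Finset.mem_singleton.1 this)
    · intro h; rw [h]; exact hev1
  rw [hfil, Finset.sum_singleton, h0] at hw
  have hnn : (0:ℝ) ≤ ∑ e ∈ Finset.univ.filter
      (fun e : G.Edge => (e : G.V × G.V).2 = ((⟨v, hob.1⟩ : G.Hidden) : G.V)), θ e ^ 2 :=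
    Finset.sum_nonneg fun e _ => sq_nonneg _
  simp only [ne_eq, OfNat.ofNat_ne_zero, not_false_eq_true, zero_pow, sub_zero] at hw
  linarith

lemma forced_sign_in (G : DagNet) (layer : G.V → ℕ)
    (hE : ∀ a b : G.V, (a, b) ∈ G.edges ↔ layer b = layer a + 1)
    (c : G.Hidden → ℝ) (v : G.V) (hib : G.InBottleneck v)
    (hcpos : 0 < c ⟨v, hib.1⟩) :
    ∃ e₀ : G.Edge, ∀ θ ∈ G.invariantSet c, θ e₀ ≠ 0 := by
  classical
  have hns : ∀ e ∈ G.edges, Prod.fst e ≠ Prod.snd e := by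
    intro e he h
    have h2 := (hE e.1 e.2).1 (by rwa [Prod.mk.eta])
    rw [h] at h2
    omega
  obtain ⟨ev, hev⟩ := Finset.card_eq_one.1 hib.2
  have hevmem : ev ∈ G.edges.filter (fun e => e.2 = v) := by
    rw [hev]; exact Finset.mem_singleton_self ev
  obtain ⟨hevE, hev2⟩ := Finset.mem_filter.1 hevmem
  refine ⟨⟨ev, hevE⟩, ?_⟩
  intro θ hθ h0
  have hw := congrFun hθ ⟨v, hib.1⟩
  rw [mulVec_split G hns (fun e => θ e ^ 2) ⟨v, hib.1⟩] at hw
  have hfil : Finset.univ.filter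
      (fun e : G.Edge => (e : G.V × G.V).2 = ((⟨v, hib.1⟩ : G.Hidden) : G.V))
      = {⟨ev, hevE⟩} := by
    ext e
    simp only [Finset.mem_filter, Finset.mem_univ, true_and, Finset.mem_singleton]
    constructor
    · intro h
      have : (e : G.V × G.V) ∈ G.edges.filter (fun e => e.2 = v) :=
        Finset.mem_filter.2 ⟨e.2, h⟩
      rw [hev] at this
      exact Subtype.ext (Finset.mem_singleton.1 this)
    · intro h; rw [h]; exact hev2
  rw [hfil, Finset.sum_singleton, h0] at hw
  have hnn : (0:ℝ) ≤ ∑ e ∈ Finset.univ.filter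
      (fun e : G.Edge => (e : G.V × G.V).1 = ((⟨v, hib.1⟩ : G.Hidden) : G.V)), θ e ^ 2 :=
    Finset.sum_nonneg fun e _ => sq_nonneg _
  simp only [ne_eq, OfNat.ofNat_ne_zero, not_false_eq_true, zero_pow, zero_sub] at hw
  linarith

/-- for a fully-connected MLP whose layers are all nonempty and
whose hidden layers all have at least two neurons, `H_G(c)` is connected iff
`c_v ≥ 0` for every out-bottleneck `v` and `c_v ≤ 0` for every
in-bottleneck `v`. -/
theorem statement7 (G : DagNet) (k : ℕ) (hk : 1 ≤ k) (layer : G.V → ℕ)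
    (hle : ∀ v : G.V, layer v ≤ k + 1)
    (hVI : G.VI = Finset.univ.filter (fun v => layer v = 0))
    (hVO : G.VO = Finset.univ.filter (fun v => layer v = k + 1))
    (hE : ∀ a b : G.V, (a, b) ∈ G.edges ↔ layer b = layer a + 1)
    (hNE : ∀ i ≤ k + 1, (Finset.univ.filter (fun v : G.V => layer v = i)).Nonempty)
    (hbig : ∀ i, 1 ≤ i → i ≤ k →
      2 ≤ (Finset.univ.filter (fun v : G.V => layer v = i)).card)
    (c : G.Hidden → ℝ) :
    IsConnected (G.invariantSet c) ↔
      ((∀ v : G.V, ∀ h : G.OutBottleneck v, 0 ≤ c ⟨v, h.1⟩) ∧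
       (∀ v : G.V, ∀ h : G.InBottleneck v, c ⟨v, h.1⟩ ≤ 0)) := by
  have hone : IsUnitSign G (fun _ => 1) := fun e => Or.inl rfl
  obtain ⟨g, hg⟩ := exists_spine G k layer hNE
  obtain ⟨x₀, hx₀0, hx₀c, -⟩ := exists_flow G k layer c hle hVI hVO hE g hg
  have hθ₀ : sqLift G (fun _ => 1) x₀ ∈ G.invariantSet c :=
    sqLift_mem G hone hx₀0 hx₀c
  constructor
  · intro hconn
    constructor
    · intro v hob
      by_contra hneg
      push_neg at hneg
      obtain ⟨e₀, hforce⟩ := forced_sign_out G layer hE c v hob hneg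
      exact not_connected_of_forced_sign G e₀ hθ₀ hforce hconn
    · intro v hib
      by_contra hpos
      push_neg at hpos
      obtain ⟨e₀, hforce⟩ := forced_sign_in G layer hE c v hib hpos
      exact not_connected_of_forced_sign G e₀ hθ₀ hforce hconn
  · rintro ⟨hout, hin⟩
    apply IsPathConnected.isConnected
    apply pathconn_invariantSet G ⟨x₀, hx₀0, hx₀c⟩
    intro e₀
    exact exists_flow_avoid G k hk layer c hle hVI hVO hE hNE hbig hout hin e₀
end
end

section
/- Assume every hidden node of G lies on a directed path from an input node to an output node. Then for every c ∈ ℝ^{Ṽ}, the invariant set H_G(c) is a connected subset of ℝ^E if and only if for every edge e ∈ E there exists x ∈ ℝ^E with x ≥ 0 entrywise, x_e = 0, and B̃x = c (i.e., the invariant set of the graph with edge e deleted is nonempty for every e). -/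
noncomputable section

open Matrix Finset

/-- `H_G(c)` is connected iff for every edge `e` the invariant
set of the graph with edge `e` deleted is nonempty, i.e. iff for every `e`
there is a nonnegative `x` with `x_e = 0` and `B̃ x = c`. -/
theorem statement8 (G : DagNet)
    (hpath : ∀ v ∈ G.hidden, ∃ i ∈ G.VI, ∃ o ∈ G.VO,
      G.Reaches i v ∧ G.Reaches v o)
    (c : G.Hidden → ℝ) :
    IsConnected (G.invariantSet c) ↔
      ∀ e : G.Edge, ∃ x : G.Edge → ℝ,
        (∀ e', 0 ≤ x e') ∧ x e = 0 ∧ G.B.mulVec x = c := by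
  classical
  constructor
  · -- connected → each deleted-edge invariant set nonempty
    intro hconn e
    by_contra hne
    push_neg at hne
    have key : ∀ θ ∈ G.invariantSet c, θ e ≠ 0 := by
      intro θ hθ h0
      refine hne (fun e' => θ e' ^ 2) (fun e' => sq_nonneg _) ?_ hθ
      show θ e ^ 2 = 0
      rw [h0]; ring
    obtain ⟨θ₀, hθ₀⟩ := hconn.nonempty
    -- flipped point
    set θ₁ : EuclideanSpace ℝ G.Edge := WithLp.toLp 2 fun e' => if e' = e then -θ₀ e' else θ₀ e' with hθ₁def
    have hθ₁ : θ₁ ∈ G.invariantSet c := by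
      have hsq : (fun e' => θ₁ e' ^ 2) = fun e' => θ₀ e' ^ 2 := by
        funext e'
        show (if e' = e then -θ₀ e' else θ₀ e') ^ 2 = θ₀ e' ^ 2
        by_cases h' : e' = e <;> simp [h']
      show G.B.mulVec (fun e' => θ₁ e' ^ 2) = c
      rw [hsq]; exact hθ₀
    have hθ₁e : θ₁ e = -θ₀ e := by
      show (if e = e then -θ₀ e else θ₀ e) = -θ₀ e
      simp
    have hcont : Continuous fun θ : EuclideanSpace ℝ G.Edge => θ e := (continuous_apply e).comp (PiLp.continuous_ofLp 2 _)
    have hu : IsOpen {θ : EuclideanSpace ℝ G.Edge | 0 < θ e} :=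
      isOpen_lt continuous_const hcont
    have hv : IsOpen {θ : EuclideanSpace ℝ G.Edge | θ e < 0} :=
      isOpen_lt hcont continuous_const
    have hcov : G.invariantSet c ⊆
        {θ : EuclideanSpace ℝ G.Edge | 0 < θ e} ∪ {θ : EuclideanSpace ℝ G.Edge | θ e < 0} := by
      intro θ hθ
      rcases (key θ hθ).lt_or_gt with h' | h'
      · exact Or.inr h'
      · exact Or.inl h'
    have hne1 : (G.invariantSet c ∩ {θ : EuclideanSpace ℝ G.Edge | 0 < θ e}).Nonempty := by
      rcases (key θ₀ hθ₀).lt_or_gt with h' | h'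
      · exact ⟨θ₁, hθ₁, by simp [hθ₁e]; linarith⟩
      · exact ⟨θ₀, hθ₀, h'⟩
    have hne2 : (G.invariantSet c ∩ {θ : EuclideanSpace ℝ G.Edge | θ e < 0}).Nonempty := by
      rcases (key θ₀ hθ₀).lt_or_gt with h' | h'
      · exact ⟨θ₀, hθ₀, h'⟩
      · exact ⟨θ₁, hθ₁, by simp [hθ₁e]; linarith⟩
    obtain ⟨z, _, hz1, hz2⟩ := hconn.isPreconnected _ _ hu hv hcov hne1 hne2
    simp only [Set.mem_setOf_eq] at hz1 hz2
    linarith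
  · -- deleted-edge invariant sets nonempty → connected
    intro h
    -- the polytope P
    set P : Set (G.Edge → ℝ) := {x | (∀ e', 0 ≤ x e') ∧ G.B.mulVec x = c} with hPdef
    set p : (G.Edge → ℝ) → (G.Edge → ℝ) → EuclideanSpace ℝ G.Edge :=
      fun σ x => WithLp.toLp 2 fun e => σ e * Real.sqrt (x e) with hpdef
    -- base point of P
    have hP0 : ∃ x₀, x₀ ∈ P := by
      rcases isEmpty_or_nonempty G.Edge with hE | hE
      · have hreachEq : ∀ a b : G.V, G.Reaches a b → a = b := by
          intro a b hr
          induction hr with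
          | refl => rfl
          | tail _ hedge _ => exact (hE.elim ⟨_, hedge⟩)
        refine ⟨0, fun _ => le_rfl, funext fun v => ?_⟩
        exfalso
        obtain ⟨v, hv⟩ := v
        obtain ⟨i, hi, _, _, hreach, _⟩ := hpath v hv
        have : v ∉ G.VI ∪ G.VO := (Finset.mem_sdiff.mp hv).2
        exact this (Finset.mem_union_left _ (hreachEq i v hreach ▸ hi))
      · obtain ⟨e₀⟩ := hE
        obtain ⟨x, h1, _, h3⟩ := h e₀
        exact ⟨x, h1, h3⟩
    obtain ⟨x₀, hx₀P⟩ := hP0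
    have hPconv : Convex ℝ P := by
      intro x hx y hy a b ha hb hab
      constructor
      · intro e'
        exact add_nonneg (mul_nonneg ha (hx.1 e')) (mul_nonneg hb (hy.1 e'))
      · have : G.B.mulVec (a • x + b • y) = a • G.B.mulVec x + b • G.B.mulVec y := by
          rw [Matrix.mulVec_add, Matrix.mulVec_smul, Matrix.mulVec_smul]
        rw [this, hx.2, hy.2, ← add_smul, hab, one_smul]
    have hpcont : ∀ σ : G.Edge → ℝ, Continuous (p σ) := fun σ =>
      (PiLp.continuous_toLp 2 _).comp (continuous_pi fun e => continuous_const.mul (Real.continuous_sqrt.comp (continuous_apply e)))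
    have hmem : ∀ σ : G.Edge → ℝ, (∀ e, σ e = 1 ∨ σ e = -1) →
        ∀ x ∈ P, p σ x ∈ G.invariantSet c := by
      intro σ hσ x hx
      show G.B.mulVec (fun e => (p σ x) e ^ 2) = c
      have hsq : (fun e => (p σ x) e ^ 2) = x := by
        funext e
        show (σ e * Real.sqrt (x e)) ^ 2 = x e
        have h1 : (σ e) ^ 2 = 1 := by rcases hσ e with h' | h' <;> simp [h']
        rw [mul_pow, h1, one_mul, Real.sq_sqrt (hx.1 e)]
      rw [hsq]; exact hx.2
    have hsector : ∀ σ : G.Edge → ℝ, (∀ e, σ e = 1 ∨ σ e = -1) →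
        (p σ '' P) ⊆ G.invariantSet c ∧ IsPreconnected (p σ '' P) := by
      intro σ hσ
      constructor
      · rintro _ ⟨x, hx, rfl⟩
        exact hmem σ hσ x hx
      · exact hPconv.isPreconnected.image _ (hpcont σ).continuousOn
    set θ₀ : EuclideanSpace ℝ G.Edge := p (fun _ => 1) x₀ with hθ₀def
    -- main claim by induction on number of negative signs
    have claim : ∀ n : ℕ, ∀ σ : G.Edge → ℝ, (∀ e, σ e = 1 ∨ σ e = -1) →
        (Finset.univ.filter (fun e => σ e = -1)).card = n →
        ∀ x ∈ P, ∃ t, t ⊆ G.invariantSet c ∧ IsPreconnected t ∧ θ₀ ∈ t ∧ p σ x ∈ t := by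
      intro n
      induction n with
      | zero =>
        intro σ hσ hcard x hx
        have hσ1 : σ = fun _ => 1 := by
          funext e
          rcases hσ e with h' | h'
          · exact h'
          · exfalso
            have : e ∈ Finset.univ.filter (fun e => σ e = -1) :=
              Finset.mem_filter.mpr ⟨Finset.mem_univ e, h'⟩
            rw [Finset.card_eq_zero.mp hcard] at this
            exact absurd this (Finset.notMem_empty e)
        refine ⟨p (fun _ => 1) '' P, (hsector _ fun _ => Or.inl rfl).1,
          (hsector _ fun _ => Or.inl rfl).2, ⟨x₀, hx₀P, rfl⟩, ?_⟩
        exact ⟨x, hx, by rw [hσ1]⟩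
      | succ n ih =>
        intro σ hσ hcard x hx
        obtain ⟨e, he⟩ : ∃ e, σ e = -1 := by
          have hpos : 0 < (Finset.univ.filter (fun e => σ e = -1)).card := by omega
          obtain ⟨e, he⟩ := Finset.card_pos.mp hpos
          exact ⟨e, (Finset.mem_filter.mp he).2⟩
        obtain ⟨xe, hxe1, hxe2, hxe3⟩ := h e
        have hxeP : xe ∈ P := ⟨hxe1, hxe3⟩
        set σ' := Function.update σ e 1 with hσ'def
        have hσ'd : ∀ e', σ' e' = 1 ∨ σ' e' = -1 := by
          intro e'
          by_cases h' : e' = e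
          · left; simp [hσ'def, h']
          · rw [hσ'def, Function.update_apply, if_neg h']
            exact hσ e'
        have hcard' : (Finset.univ.filter (fun e' => σ' e' = -1)).card = n := by
          have hset : Finset.univ.filter (fun e' => σ' e' = -1) =
              (Finset.univ.filter (fun e' => σ e' = -1)).erase e := by
            ext e'
            simp only [Finset.mem_filter, Finset.mem_erase, Finset.mem_univ, true_and]
            constructor
            · intro h'
              by_cases h'' : e' = e
              · exfalso
                rw [h'', hσ'def, Function.update_self] at h'
                norm_num at h'
              · rw [hσ'def, Function.update_apply, if_neg h''] at h'
                exact ⟨h'', h'⟩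
            · intro ⟨h'', h'⟩
              rw [hσ'def, Function.update_apply, if_neg h'']
              exact h'
          have hemem : e ∈ Finset.univ.filter (fun e' => σ e' = -1) :=
            Finset.mem_filter.mpr ⟨Finset.mem_univ e, he⟩
          rw [hset, Finset.card_erase_of_mem hemem, hcard]
          omega
        obtain ⟨t₂, ht₂H, ht₂con, ht₂θ₀, ht₂p⟩ := ih σ' hσ'd hcard' xe hxeP
        have heq : p σ xe = p σ' xe := by
          ext e'
          show σ e' * Real.sqrt (xe e') = σ' e' * Real.sqrt (xe e')
          by_cases h' : e' = e
          · subst h'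
            rw [hxe2, Real.sqrt_zero, mul_zero, mul_zero]
          · rw [hσ'def, Function.update_apply, if_neg h']
        refine ⟨p σ '' P ∪ t₂, Set.union_subset (hsector σ hσ).1 ht₂H, ?_, Or.inr ht₂θ₀,
          Or.inl ⟨x, hx, rfl⟩⟩
        exact IsPreconnected.union (p σ xe) ⟨xe, hxeP, rfl⟩ (heq ▸ ht₂p)
          (hsector σ hσ).2 ht₂con
    constructor
    · exact ⟨θ₀, hmem _ (fun _ => Or.inl rfl) x₀ hx₀P⟩
    · refine isPreconnected_of_forall θ₀ ?_
      intro θ hθ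
      set σ : G.Edge → ℝ := fun e => if θ e < 0 then -1 else 1 with hσdef
      have hσd : ∀ e, σ e = 1 ∨ σ e = -1 := by
        intro e
        by_cases h' : θ e < 0
        · right; simp [hσdef, h']
        · left; simp [hσdef, h']
      have hxP : (fun e => θ e ^ 2) ∈ P := ⟨fun e => sq_nonneg _, hθ⟩
      have hpθ : p σ (fun e => θ e ^ 2) = θ := by
        ext e
        show σ e * Real.sqrt (θ e ^ 2) = θ e
        rw [Real.sqrt_sq_eq_abs]
        by_cases h' : θ e < 0
        · rw [hσdef]; simp only [if_pos h']
          rw [abs_of_neg h']; ring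
        · rw [hσdef]; simp only [if_neg h']
          rw [abs_of_nonneg (not_lt.mp h'), one_mul]
      obtain ⟨t, ht1, ht2, ht3, ht4⟩ := claim _ σ hσd rfl _ hxP
      exact ⟨t, ht1, ht3, hpθ ▸ ht4, ht2⟩
end
end

section
/- For every θ ∈ ℝ^E, the rank of the matrix B̃·diag(θ) ∈ ℝ^{Ṽ×E} equals |Ṽ| + 1 − CC(G'_θ), where G'_θ is the undirected graph on the vertex set Ṽ ⊔ {⋆} having, for each edge (u, w) ∈ E with θ_{(u,w)} ≠ 0, an edge between π(u) and π(w), with π the map sending each hidden node to itself and each input or output node to ⋆, and CC(G'_θ) is the number of connected components of G'_θ. -/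
noncomputable section

open Matrix Finset

namespace Statement11Aux

variable (G : DagNet) (θ : G.Edge → ℝ)

/-- Extend a function on hidden nodes by `0` at `⋆`. -/
def ext0 (x : G.Hidden → ℝ) : Option G.Hidden → ℝ := fun o => o.elim 0 x

lemma aux_no_loop (e : G.Edge) : (e : G.V × G.V).1 ≠ (e : G.V × G.V).2 := by
  obtain ⟨⟨a, b⟩, he⟩ := e
  intro h
  simp only at h
  subst h
  exact G.acyclic a (Relation.TransGen.single he)

lemma aux_sum (c : G.V) (x : G.Hidden → ℝ) :
    ∑ v : G.Hidden, (if c = (v : G.V) then x v else 0) = ext0 G x (G.pi c) := by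
  by_cases h : c ∈ G.hidden
  · rw [Fintype.sum_eq_single (⟨c, h⟩ : G.Hidden)]
    · simp [ext0, DagNet.pi, h]
    · intro v hv
      rw [if_neg]
      intro hc
      exact hv (Subtype.ext hc.symm)
  · rw [Finset.sum_eq_zero]
    · simp [ext0, DagNet.pi, h]
    · intro v _
      rw [if_neg]
      intro hc
      exact h (hc ▸ v.2)

lemma aux_mulVec (x : G.Hidden → ℝ) (e : G.Edge) :
    ((G.B * Matrix.diagonal θ)ᵀ.mulVec x) e
      = θ e * (ext0 G x (G.pi (e : G.V × G.V).2) - ext0 G x (G.pi (e : G.V × G.V).1)) := by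
  have key : ∀ v : G.Hidden,
      (G.B * Matrix.diagonal θ)ᵀ e v * x v
        = θ e * ((if (e : G.V × G.V).2 = (v : G.V) then x v else 0)
            - (if (e : G.V × G.V).1 = (v : G.V) then x v else 0)) := by
    intro v
    rw [Matrix.transpose_apply, Matrix.mul_diagonal]
    by_cases h2 : (e : G.V × G.V).2 = (v : G.V)
    · have h1 : ¬ (e : G.V × G.V).1 = (v : G.V) := fun h1 =>
        aux_no_loop G e (h1.trans h2.symm)
      simp only [DagNet.B, Matrix.of_apply, h1, h2, if_true, if_false]
      ring
    · by_cases h1 : (e : G.V × G.V).1 = (v : G.V) <;>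
        simp only [DagNet.B, Matrix.of_apply, h1, h2, if_true, if_false] <;> ring
  calc ((G.B * Matrix.diagonal θ)ᵀ.mulVec x) e
      = ∑ v : G.Hidden, (G.B * Matrix.diagonal θ)ᵀ e v * x v := rfl
    _ = ∑ v : G.Hidden, θ e * ((if (e : G.V × G.V).2 = (v : G.V) then x v else 0)
            - (if (e : G.V × G.V).1 = (v : G.V) then x v else 0)) := by
        exact Finset.sum_congr rfl fun v _ => key v
    _ = θ e * (ext0 G x (G.pi (e : G.V × G.V).2) - ext0 G x (G.pi (e : G.V × G.V).1)) := by
        rw [← Finset.mul_sum, Finset.sum_sub_distrib, aux_sum, aux_sum]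

end Statement11Aux

open Statement11Aux in
/-- for every `θ`, the rank of `B̃ · diag(θ)` equals
`|Ṽ| + 1 − CC(G'_θ)`, where `G'_θ` is the undirected graph on `Ṽ ⊔ {⋆}`
obtained from the nonzero-weight edges of `G` by gluing all input and output
nodes into `⋆`. -/
theorem statement11 (G : DagNet) (θ : G.Edge → ℝ) :
    ((G.B * Matrix.diagonal θ).rank : ℤ) =
      (Fintype.card G.Hidden : ℤ) + 1
        - (Nat.card (G.quotGraph θ).ConnectedComponent : ℤ) := by
  classical
  set M := G.B * Matrix.diagonal θ with hMdef
  set Q := G.quotGraph θ with hQdef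
  letI : Fintype Q.ConnectedComponent := Fintype.ofFinite _
  set K := LinearMap.ker (Mᵀ).mulVecLin with hKdef
  -- rank-nullity for Mᵀ
  have hrn : M.rank + Module.finrank ℝ K = Fintype.card G.Hidden := by
    have h1 := LinearMap.finrank_range_add_finrank_ker (Mᵀ).mulVecLin
    rw [Module.finrank_fintype_fun_eq_card] at h1
    have h2 : Mᵀ.rank = Module.finrank ℝ (LinearMap.range (Mᵀ).mulVecLin) := rfl
    rw [← Matrix.rank_transpose M, h2]
    exact h1
  -- membership in K
  have hmem : ∀ x : G.Hidden → ℝ, x ∈ K ↔ ∀ e : G.Edge, θ e ≠ 0 →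
      ext0 G x (G.pi (e : G.V × G.V).2) = ext0 G x (G.pi (e : G.V × G.V).1) := by
    intro x
    rw [LinearMap.mem_ker]
    constructor
    · intro h e he
      have h0 : ((Mᵀ).mulVec x) e = 0 := by
        rw [show (Mᵀ).mulVec x = (Mᵀ).mulVecLin x from rfl, h]; rfl
      rw [aux_mulVec] at h0
      rcases mul_eq_zero.1 h0 with h' | h'
      · exact absurd h' he
      · exact sub_eq_zero.1 h'
    · intro h
      funext e
      show ((Mᵀ).mulVec x) e = 0
      rw [aux_mulVec]
      by_cases he : θ e = 0
      · rw [he, zero_mul]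
      · rw [h e he, sub_self, mul_zero]
  -- adjacency facts
  have hadjresp : ∀ (e : G.Edge), θ e ≠ 0 →
      Q.connectedComponentMk (G.pi (e : G.V × G.V).1)
        = Q.connectedComponentMk (G.pi (e : G.V × G.V).2) := by
    intro e he
    by_cases hp : G.pi (e : G.V × G.V).1 = G.pi (e : G.V × G.V).2
    · rw [hp]
    · apply SimpleGraph.ConnectedComponent.eq.2
      apply SimpleGraph.Adj.reachable
      rw [hQdef]
      show (SimpleGraph.fromRel _).Adj _ _
      rw [SimpleGraph.fromRel_adj]
      exact ⟨hp, Or.inl ⟨e, he, rfl, rfl⟩⟩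
  set c0 : Q.ConnectedComponent := Q.connectedComponentMk none with hc0def
  -- the linear map L
  let L : (Q.ConnectedComponent → ℝ) →ₗ[ℝ] (G.Hidden → ℝ) :=
    { toFun := fun g v => g (Q.connectedComponentMk (some v)) - g c0
      map_add' := by intro g₁ g₂; funext v; simp; ring
      map_smul' := by intro r g; funext v; simp; ring }
  have hLapply : ∀ (g : Q.ConnectedComponent → ℝ) (v : G.Hidden),
      L g v = g (Q.connectedComponentMk (some v)) - g c0 := fun _ _ => rfl
  have hext : ∀ (g : Q.ConnectedComponent → ℝ) (w : G.V),
      ext0 G (L g) (G.pi w) = g (Q.connectedComponentMk (G.pi w)) - g c0 := by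
    intro g w
    by_cases h : w ∈ G.hidden
    · simp [ext0, DagNet.pi, h, hLapply]
    · simp [ext0, DagNet.pi, h, hc0def]
  -- range L = K
  have hrange : LinearMap.range L = K := by
    apply le_antisymm
    · rintro x ⟨g, rfl⟩
      rw [hmem]
      intro e he
      rw [hext, hext, hadjresp e he]
    · intro x hx
      rw [hmem] at hx
      -- ext0 respects adjacency
      have hresp : ∀ a b, Q.Adj a b → ext0 G x a = ext0 G x b := by
        intro a b hab
        rw [hQdef] at hab
        rw [show (G.quotGraph θ).Adj a b ↔ (SimpleGraph.fromRel _).Adj a b from Iff.rfl,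
          SimpleGraph.fromRel_adj] at hab
        obtain ⟨-, h | h⟩ := hab
        · obtain ⟨e, he, rfl, rfl⟩ := h
          exact (hx e he).symm
        · obtain ⟨e, he, rfl, rfl⟩ := h
          exact hx e he
      have hwalk : ∀ (a b : Option G.Hidden) (p : Q.Walk a b), p.IsPath →
          ext0 G x a = ext0 G x b := by
        intro a b p hp
        clear hp
        induction p with
        | nil => rfl
        | cons h p ih => exact (hresp _ _ h).trans ih
      refine ⟨SimpleGraph.ConnectedComponent.lift (ext0 G x) hwalk, ?_⟩
      funext v
      rw [hLapply]
      show ext0 G x (some v) - ext0 G x none = x v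
      simp [ext0]
  -- constants map
  let cmap : ℝ →ₗ[ℝ] (Q.ConnectedComponent → ℝ) :=
    { toFun := fun r _ => r
      map_add' := by intro a b; rfl
      map_smul' := by intro a b; rfl }
  have hker : LinearMap.ker L = LinearMap.range cmap := by
    apply le_antisymm
    · intro g hg
      rw [LinearMap.mem_ker] at hg
      have hgv : ∀ v : G.Hidden, g (Q.connectedComponentMk (some v)) = g c0 := by
        intro v
        have := congrFun hg v
        rw [hLapply] at this
        exact sub_eq_zero.1 this
      refine ⟨g c0, ?_⟩
      funext c
      induction c using SimpleGraph.ConnectedComponent.ind with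
      | _ o =>
        cases o with
        | none => rfl
        | some v => exact (hgv v).symm
    · rintro g ⟨r, rfl⟩
      rw [LinearMap.mem_ker]
      funext v
      rw [hLapply]
      show r - r = 0
      ring
  have hcinj : Function.Injective cmap := by
    intro a b h
    exact congrFun h c0
  have hkerdim : Module.finrank ℝ (LinearMap.ker L) = 1 := by
    rw [hker, LinearMap.finrank_range_of_inj hcinj, Module.finrank_self]
  have hrnL : Module.finrank ℝ K + 1 = Fintype.card Q.ConnectedComponent := by
    have h1 := LinearMap.finrank_range_add_finrank_ker L
    rw [Module.finrank_fintype_fun_eq_card, hkerdim, hrange] at h1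
    exact h1
  have hcard : Nat.card Q.ConnectedComponent = Fintype.card Q.ConnectedComponent :=
    Nat.card_eq_fintype_card
  omega
end
end

section
/- Suppose L : ℝ^E → ℝ is twice continuously differentiable and satisfies L(T^v_α(θ)) = L(θ) for every hidden node v, every α > 0, and every θ ∈ ℝ^E. Let θ : [0,∞) → ℝ^E be a continuously differentiable curve solving the gradient flow θ'(t) = −∇L(θ(t)) for all t ≥ 0. Then the rank of the Jacobian of the invariant set is conserved along the trajectory: rank(B̃·diag(θ(t))) = rank(B̃·diag(θ(0))) for all finite t ≥ 0. -/
noncomputable section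

open Matrix Finset

section Statement15Helpers

/-- Coordinatewise multiplication as a continuous linear map on Euclidean space. -/
noncomputable def mulCLM {ι : Type} [Fintype ι] (a : ι → ℝ) :
    EuclideanSpace ℝ ι →L[ℝ] EuclideanSpace ℝ ι :=
  LinearMap.toContinuousLinearMap
    { toFun := fun θ => WithLp.toLp 2 (fun e => a e * θ e)
      map_add' := by
        intro u v; ext e; simp [mul_add]
      map_smul' := by
        intro c u; ext e; simp [smul_eq_mul]; ring }

lemma mulCLM_apply {ι : Type} [Fintype ι] (a : ι → ℝ) (θ : EuclideanSpace ℝ ι) (e : ι) :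
    mulCLM a θ e = a e * θ e := rfl

lemma inner_mulCLM {ι : Type} [Fintype ι] (a : ι → ℝ) (u v : EuclideanSpace ℝ ι) :
    (inner ℝ (mulCLM a u) v : ℝ) = inner ℝ u (mulCLM a v) := by
  simp only [PiLp.inner_apply, mulCLM_apply, RCLike.inner_apply, conj_trivial]
  exact Finset.sum_congr rfl (fun e _ => by ring)

lemma inner_gradient_eq {ι : Type} [Fintype ι] (f : EuclideanSpace ℝ ι → ℝ)
    (x y : EuclideanSpace ℝ ι) : (inner ℝ (gradient f x) y : ℝ) = fderiv ℝ f x y := by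
  rw [gradient]
  exact InnerProductSpace.toDual_symm_apply

lemma rank_eq_of_ker {m n : Type} [Fintype m] [Fintype n] (M₁ M₂ : Matrix m n ℝ)
    (h : ∀ x : m → ℝ, M₁ᵀ.mulVec x = 0 ↔ M₂ᵀ.mulVec x = 0) : M₁.rank = M₂.rank := by
  rw [← Matrix.rank_transpose M₁, ← Matrix.rank_transpose M₂]
  have hk : LinearMap.ker M₁ᵀ.mulVecLin = LinearMap.ker M₂ᵀ.mulVecLin := by
    ext x
    simpa [LinearMap.mem_ker, Matrix.mulVecLin_apply, ← Matrix.mulVec_transpose] using h x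
  have h1 := LinearMap.finrank_range_add_finrank_ker (M₁ᵀ.mulVecLin)
  have h2 := LinearMap.finrank_range_add_finrank_ker (M₂ᵀ.mulVecLin)
  rw [Matrix.rank, Matrix.rank]
  rw [hk] at h1
  omega

/-- Grönwall-type lemma: a nonnegative function whose derivative is bounded by a
multiple of itself vanishes at time `T` iff it vanishes at time `0`. -/
lemma gronwall_zero_iff {N D : ℝ → ℝ} {T C : ℝ} (hT : 0 ≤ T)
    (hd : ∀ s ∈ Set.Icc 0 T, HasDerivAt N (D s) s)
    (hpos : ∀ s ∈ Set.Icc 0 T, 0 ≤ N s)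
    (hb : ∀ s ∈ Set.Icc 0 T, |D s| ≤ C * N s) :
    (N T = 0 ↔ N 0 = 0) := by
  have h0T : (0:ℝ) ∈ Set.Icc 0 T := ⟨le_rfl, hT⟩
  have hTT : T ∈ Set.Icc 0 T := ⟨hT, le_rfl⟩
  have hfd : ∀ s ∈ Set.Icc 0 T, HasDerivAt (fun s => Real.exp (-C * s) * N s)
      (Real.exp (-C * s) * (-C) * N s + Real.exp (-C * s) * D s) s := by
    intro s hs
    have h1 : HasDerivAt (fun s : ℝ => Real.exp (-C * s)) (Real.exp (-C * s) * (-C)) s := by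
      simpa using ((hasDerivAt_id s).const_mul (-C)).exp
    exact h1.mul (hd s hs)
  have hgd : ∀ s ∈ Set.Icc 0 T, HasDerivAt (fun s => Real.exp (C * s) * N s)
      (Real.exp (C * s) * C * N s + Real.exp (C * s) * D s) s := by
    intro s hs
    have h1 : HasDerivAt (fun s : ℝ => Real.exp (C * s)) (Real.exp (C * s) * C) s := by
      simpa using ((hasDerivAt_id s).const_mul C).exp
    exact h1.mul (hd s hs)
  have hanti : AntitoneOn (fun s => Real.exp (-C * s) * N s) (Set.Icc 0 T) := by
    apply antitoneOn_of_deriv_nonpos (convex_Icc 0 T)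
    · exact fun s hs => ((hfd s hs).continuousAt).continuousWithinAt
    · intro s hs
      rw [interior_Icc] at hs
      exact ((hfd s (Set.Ioo_subset_Icc_self hs)).differentiableAt).differentiableWithinAt
    · intro s hs
      rw [interior_Icc] at hs
      have hs' := Set.Ioo_subset_Icc_self hs
      rw [(hfd s hs').deriv]
      have hD := abs_le.mp (hb s hs')
      have hexp := Real.exp_pos (-C * s)
      nlinarith [mul_le_mul_of_nonneg_left hD.2 hexp.le]
  have hmono : MonotoneOn (fun s => Real.exp (C * s) * N s) (Set.Icc 0 T) := by
    apply monotoneOn_of_deriv_nonneg (convex_Icc 0 T)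
    · exact fun s hs => ((hgd s hs).continuousAt).continuousWithinAt
    · intro s hs
      rw [interior_Icc] at hs
      exact ((hgd s (Set.Ioo_subset_Icc_self hs)).differentiableAt).differentiableWithinAt
    · intro s hs
      rw [interior_Icc] at hs
      have hs' := Set.Ioo_subset_Icc_self hs
      rw [(hgd s hs').deriv]
      have hD := abs_le.mp (hb s hs')
      have hexp := Real.exp_pos (C * s)
      nlinarith [mul_le_mul_of_nonneg_left hD.1 hexp.le]
  constructor
  · intro hNT
    have h := hmono h0T hTT hT
    simp only [hNT, mul_zero] at h
    have h0 := hpos 0 h0T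
    nlinarith [Real.exp_pos (0:ℝ), Real.exp_pos (C * 0)]
  · intro hN0
    have h := hanti h0T hTT hT
    simp only [hN0, mul_zero] at h
    have h0 := hpos T hTT
    nlinarith [Real.exp_pos (0:ℝ), Real.exp_pos (-C * T)]

end Statement15Helpers

/-- along a gradient-flow trajectory of a `C²` loss invariant
under all rescalings at hidden nodes, the rank of the Jacobian
`B̃ · diag(θ(t))` of the invariant set is conserved for all finite `t ≥ 0`. -/
theorem statement15 (G : DagNet) (L : EuclideanSpace ℝ G.Edge → ℝ)
    (hL : ContDiff ℝ 2 L)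
    (hinv : ∀ v ∈ G.hidden, ∀ α : ℝ, 0 < α → ∀ θ : EuclideanSpace ℝ G.Edge,
      L (G.rescale v α θ) = L θ)
    (θ : ℝ → EuclideanSpace ℝ G.Edge)
    (hflow : ∀ t : ℝ, 0 ≤ t → HasDerivAt θ (-(gradient L (θ t))) t) :
    ∀ t : ℝ, 0 ≤ t →
      (G.B * Matrix.diagonal (fun e => θ t e)).rank
        = (G.B * Matrix.diagonal (fun e => θ 0 e)).rank := by
    classical
  intro t ht
  have hLd : Differentiable ℝ L := hL.differentiable (by norm_num)
  have hfd : ContDiff ℝ 1 (fderiv ℝ L) := hL.fderiv_right (by norm_num)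
  have h2d : Differentiable ℝ (fderiv ℝ L) := hfd.differentiable (by norm_num)
  -- Step A: derivative of the rescaling invariance at α = 1
  have hA : ∀ (v : G.Hidden) (y : EuclideanSpace ℝ G.Edge),
      fderiv ℝ L y (mulCLM (fun e => G.B v e) y) = 0 := by
    intro v y
    set u : EuclideanSpace ℝ G.Edge :=
      WithLp.toLp 2 (fun e => if (e : G.V × G.V).2 = (v : G.V) then y e else 0) with hu
    set w : EuclideanSpace ℝ G.Edge :=
      WithLp.toLp 2 (fun e => if (e : G.V × G.V).2 = (v : G.V) then 0
        else if (e : G.V × G.V).1 = (v : G.V) then y e else 0) with hw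
    have hres : ∀ α : ℝ, G.rescale (v : G.V) α y = y + ((α - 1) • u + (α⁻¹ - 1) • w) := by
      intro α
      ext e
      simp only [DagNet.rescale, hu, hw, PiLp.add_apply, PiLp.smul_apply, smul_eq_mul, PiLp.toLp_apply]
      split_ifs <;> ring
    have h1 : HasDerivAt (fun α : ℝ => (α - 1) • u) ((1:ℝ) • u) 1 :=
      ((hasDerivAt_id (1:ℝ)).sub_const 1).smul_const u
    have h2 : HasDerivAt (fun α : ℝ => (α⁻¹ - 1) • w) ((-((1:ℝ) ^ 2)⁻¹) • w) 1 :=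
      ((hasDerivAt_inv (one_ne_zero)).sub_const 1).smul_const w
    have hF : HasDerivAt (fun α : ℝ => y + ((α - 1) • u + (α⁻¹ - 1) • w))
        ((1:ℝ) • u + (-((1:ℝ) ^ 2)⁻¹) • w) 1 := (h1.add h2).const_add y
    have hcomp : HasDerivAt (fun α : ℝ => L (y + ((α - 1) • u + (α⁻¹ - 1) • w)))
        (fderiv ℝ L (y + (((1:ℝ) - 1) • u + ((1:ℝ)⁻¹ - 1) • w))
          ((1:ℝ) • u + (-((1:ℝ) ^ 2)⁻¹) • w)) 1 :=
      (hLd _).hasFDerivAt.comp_hasDerivAt 1 hF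
    have heq : (fun α : ℝ => L (y + ((α - 1) • u + (α⁻¹ - 1) • w)))
        =ᶠ[nhds (1:ℝ)] (fun _ => L y) := by
      filter_upwards [eventually_gt_nhds (zero_lt_one)] with α hα
      rw [← hres α]
      exact hinv (v : G.V) v.2 α hα y
    have hzero : HasDerivAt (fun α : ℝ => L (y + ((α - 1) • u + (α⁻¹ - 1) • w))) 0 1 :=
      (hasDerivAt_const 1 (L y)).congr_of_eventuallyEq heq
    have huniq := hcomp.unique hzero
    have hpt : y + (((1:ℝ) - 1) • u + ((1:ℝ)⁻¹ - 1) • w) = y := by simp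
    have hvec : ((1:ℝ) • u + (-((1:ℝ) ^ 2)⁻¹) • w) = mulCLM (fun e => G.B v e) y := by
      ext e
      simp only [PiLp.add_apply, PiLp.smul_apply, smul_eq_mul, one_pow, inv_one,
        mulCLM_apply, DagNet.B, Matrix.of_apply, hu, hw, PiLp.toLp_apply]
      split_ifs <;> ring
    rw [hpt, hvec] at huniq
    exact huniq
  -- reduce to equality of left kernels
  apply rank_eq_of_ker
  intro x
  set a : G.Edge → ℝ := fun e => ∑ v : G.Hidden, x v * G.B v e with ha
  have hsum : ∀ y : EuclideanSpace ℝ G.Edge,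
      mulCLM a y = ∑ v : G.Hidden, x v • mulCLM (fun e => G.B v e) y := by
    intro y
    ext e
    have hE : (∑ v : G.Hidden, x v • mulCLM (fun e => G.B v e) y) e
        = ∑ v : G.Hidden, (x v • mulCLM (fun e => G.B v e) y) e := by
      rw [WithLp.ofLp_sum]; exact Finset.sum_apply e Finset.univ _
    rw [hE]
    simp only [PiLp.smul_apply, smul_eq_mul, mulCLM_apply, ha]
    rw [Finset.sum_mul]
    exact Finset.sum_congr rfl fun v _ => by ring
  have hq0 : ∀ y : EuclideanSpace ℝ G.Edge, fderiv ℝ L y (mulCLM a y) = 0 := by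
    intro y
    rw [hsum y, map_sum]
    refine Finset.sum_eq_zero fun v _ => ?_
    rw [ContinuousLinearMap.map_smul, hA v y, smul_zero]
  have hq' : ∀ y : EuclideanSpace ℝ G.Edge,
      ((fderiv ℝ L y).comp (mulCLM a) + (fderiv ℝ (fderiv ℝ L) y).flip (mulCLM a y))
        = (0 : EuclideanSpace ℝ G.Edge →L[ℝ] ℝ) := by
    intro y
    have h1 : HasFDerivAt (fun z => fderiv ℝ L z (mulCLM a z))
        ((fderiv ℝ L y).comp (mulCLM a) + (fderiv ℝ (fderiv ℝ L) y).flip (mulCLM a y)) y :=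
      ((h2d y).hasFDerivAt).clm_apply (mulCLM a).hasFDerivAt
    have heq2 : (fun z : EuclideanSpace ℝ G.Edge => fderiv ℝ L z (mulCLM a z))
        = fun _ => (0:ℝ) := funext hq0
    rw [heq2] at h1
    exact h1.unique (hasFDerivAt_const 0 y)
  have hkey : ∀ y : EuclideanSpace ℝ G.Edge,
      fderiv ℝ L y (mulCLM a (mulCLM a y))
        = -(fderiv ℝ (fderiv ℝ L) y (mulCLM a y)) (mulCLM a y) := by
    intro y
    have h := DFunLike.congr_fun (hq' y) (mulCLM a y)
    simp only [ContinuousLinearMap.add_apply, ContinuousLinearMap.coe_comp',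
      Function.comp_apply, ContinuousLinearMap.flip_apply,
      ContinuousLinearMap.zero_apply] at h
    linarith
  set g : ℝ → EuclideanSpace ℝ G.Edge := fun s => mulCLM a (θ s) with hg
  set N : ℝ → ℝ := fun s => (inner ℝ (g s) (g s) : ℝ) with hN
  set D : ℝ → ℝ := fun s => 2 * (fderiv ℝ (fderiv ℝ L) (θ s) (g s)) (g s) with hD
  have hNd : ∀ s ∈ Set.Icc (0:ℝ) t, HasDerivAt N (D s) s := by
    intro s hs
    have hgs : HasDerivAt g (mulCLM a (-(gradient L (θ s)))) s :=
      ((mulCLM a).hasFDerivAt).comp_hasDerivAt s (hflow s hs.1)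
    have h := hgs.inner ℝ hgs
    have e1 : (inner ℝ (g s) (mulCLM a (-(gradient L (θ s)))) : ℝ)
        = (fderiv ℝ (fderiv ℝ L) (θ s) (g s)) (g s) := by
      rw [← inner_mulCLM a (g s) (-(gradient L (θ s))), inner_neg_right,
        real_inner_comm, inner_gradient_eq, hkey (θ s)]
      simp [hg]
    have e2 : (inner ℝ (mulCLM a (-(gradient L (θ s)))) (g s) : ℝ)
        = (fderiv ℝ (fderiv ℝ L) (θ s) (g s)) (g s) := by
      rw [real_inner_comm]
      exact e1
    have heq3 : (inner ℝ (g s) (mulCLM a (-(gradient L (θ s)))) : ℝ)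
        + (inner ℝ (mulCLM a (-(gradient L (θ s)))) (g s) : ℝ)
        = 2 * (fderiv ℝ (fderiv ℝ L) (θ s) (g s)) (g s) := by
      rw [e1, e2]; ring
    rw [heq3] at h
    exact h
  have hcont2 : Continuous (fderiv ℝ (fderiv ℝ L)) := hfd.continuous_fderiv (by norm_num)
  have hθc : ContinuousOn θ (Set.Icc 0 t) := fun s hs =>
    ((hflow s hs.1).continuousAt).continuousWithinAt
  obtain ⟨C, hC⟩ := (isCompact_Icc (a := (0:ℝ)) (b := t)).exists_bound_of_continuousOn
    (f := fderiv ℝ (fderiv ℝ L) ∘ θ) (by exact hcont2.comp_continuousOn hθc)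
  have hNpos : ∀ s ∈ Set.Icc (0:ℝ) t, 0 ≤ N s := fun s _ => real_inner_self_nonneg
  have hbound : ∀ s ∈ Set.Icc (0:ℝ) t, |D s| ≤ (2 * C) * N s := by
    intro s hs
    have h1 : ‖(fderiv ℝ (fderiv ℝ L) (θ s) (g s)) (g s)‖
        ≤ ‖fderiv ℝ (fderiv ℝ L) (θ s)‖ * ‖g s‖ * ‖g s‖ :=
      ContinuousLinearMap.le_opNorm₂ _ _ _
    have h2 : N s = ‖g s‖ ^ 2 := real_inner_self_eq_norm_sq (g s)
    have h3 := hC s hs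
    have h4 : (0:ℝ) ≤ ‖g s‖ := norm_nonneg _
    rw [hD, h2, abs_mul]
    rw [Real.norm_eq_abs] at h1
    have h5 : |(2:ℝ)| = 2 := by norm_num
    rw [h5]
    simp only [Function.comp_apply] at h3
    nlinarith [norm_nonneg (fderiv ℝ (fderiv ℝ L) (θ s)),
      mul_le_mul_of_nonneg_right (mul_le_mul_of_nonneg_right h3 h4) h4]
  have hiff := gronwall_zero_iff ht hNd hNpos hbound
  -- translate kernel conditions
  have hM : ∀ s : ℝ, ((G.B * Matrix.diagonal (fun e => θ s e))ᵀ).mulVec x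
      = mulCLM a (θ s) := by
    intro s
    ext e
    simp only [Matrix.mulVec, Matrix.transpose_apply, dotProduct,
      Matrix.mul_diagonal, mulCLM_apply, ha]
    rw [Finset.sum_mul]
    exact Finset.sum_congr rfl fun v _ => by ring
  have hzt : ∀ s : ℝ, (mulCLM a (θ s) = 0 ↔ N s = 0) := by
    intro s
    rw [hN]
    exact (inner_self_eq_zero (𝕜 := ℝ)).symm
  rw [hM t, hM 0]; simp only [WithLp.ofLp_eq_zero]
  rw [hzt t, hzt 0]
  exact hiff
end
end
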